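/- arXiv:0710.3760 — 2 statements merged into one kernel-verified Lean document; each statement's English description precedes it below -/
import Mathlib

section
/- For every k ≥ 1, every n ≥ 0 and every binary string x_{-n}^0 ∈ {0,1}^{n+1}, P(X̃_{-n}^0 = x_{-n}^0, λ̂_k(X̃_{-∞}^0) = n) = P(X_{-n}^0 = x_{-n}^0, λ̂_k(X_{-∞}^0) = n), where λ̂_k is the backward recurrence stopping time applied to a one-sided sequence. -/
open MeasureTheory Filter Finset

/-- Two-sided binary sequences: the sample space of the process `X_n(ω) = ω n`. -/
abbrev BSeq := ℤ → Bool

/-- The left shift on two-sided sequences. -/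
def shift : BSeq → BSeq := fun ω n => ω (n + 1)

/-- The recurrence stopping times `λ_k`:  `λ_0 = 0`,
`λ_{k+1} = λ_k + min {t > 0 : X_t^{λ_k + t} = X_0^{λ_k}}`. -/
noncomputable def lam : ℕ → BSeq → ℕ
  | 0, _ => 0
  | k + 1, ω =>
      lam k ω +
        sInf {t : ℕ | 0 < t ∧ ∀ i : ℕ, i ≤ lam k ω → ω ((t : ℤ) + (i : ℤ)) = ω (i : ℤ)}

/-- The increments `τ_k = λ_k - λ_{k-1}`. -/
noncomputable def tau (k : ℕ) (ω : BSeq) : ℕ := lam k ω - lam (k - 1) ω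

/-- The auxiliary process `X̃`:  `X̃_{-n} = X_{λ_n - n}` (so that `X̃_{-λ_k}^0 = X_0^{λ_k}`).
Here `tildeX n ω` stands for `X̃_{-n}(ω)`. -/
noncomputable def tildeX (n : ℕ) (ω : BSeq) : Bool := ω ((lam n ω : ℤ) - (n : ℤ))

/-- The one-sided sequence `X̃_0, X̃_{-1}, X̃_{-2}, …`. -/
noncomputable def tilSeq (ω : BSeq) : ℕ → Bool := fun j => tildeX j ω

/-- The one-sided past `X_0, X_{-1}, X_{-2}, …` of the original process. -/
def past (ω : BSeq) : ℕ → Bool := fun j => ω (-(j : ℤ))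

/-- Backward recurrence stopping times `λ̂_k` for a one-sided sequence
`y = (Y_0, Y_{-1}, Y_{-2}, …)` (with `y j = Y_{-j}`):  `λ̂_0 = 0`,
`λ̂_{k+1} = λ̂_k + min {t > 0 : Y_{-λ̂_k - t}^{-t} = Y_{-λ̂_k}^0}`. -/
noncomputable def hlam : ℕ → (ℕ → Bool) → ℕ
  | 0, _ => 0
  | k + 1, y => hlam k y + sInf {t : ℕ | 0 < t ∧ ∀ i : ℕ, i ≤ hlam k y → y (t + i) = y i}

/-- The backward increments `τ̂_k = λ̂_k - λ̂_{k-1}`. -/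
noncomputable def tauhat (k : ℕ) (y : ℕ → Bool) : ℕ := hlam k y - hlam (k - 1) y

/-- The observation map recording the finite data segment `X_0^{L(ω)}`
(coded over `ℕ`, with `2` marking unobserved coordinates). -/
noncomputable def obs (L : BSeq → ℕ) (ω : BSeq) : ℕ → ℕ :=
  fun n => if n ≤ L ω then (if ω (n : ℤ) then 1 else 0) else 2

/-- The σ-algebra `σ(X_0^{λ_k})`. -/
noncomputable def Fk (k : ℕ) : MeasurableSpace BSeq :=
  MeasurableSpace.comap (obs (lam k)) (inferInstance : MeasurableSpace (ℕ → ℕ))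

/-- The σ-algebra `σ(X_0^{λ_k + 1})`. -/
noncomputable def Gk (k : ℕ) : MeasurableSpace BSeq :=
  MeasurableSpace.comap (obs (fun ω => lam k ω + 1)) (inferInstance : MeasurableSpace (ℕ → ℕ))

/-- The output following the `k`-th recurrence: `X_{λ_k + 1}` (as a real number). -/
noncomputable def Xnext (k : ℕ) (ω : BSeq) : ℝ := if ω ((lam k ω : ℤ) + 1) then 1 else 0

/-- The estimator `P_k = (1/(k-1)) ∑_{j=1}^{k-1} X_{λ_j + 1}`. -/
noncomputable def Pk (k : ℕ) (ω : BSeq) : ℝ :=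
  (1 / ((k : ℝ) - 1)) * ∑ j ∈ Finset.Icc 1 (k - 1), Xnext j ω

/-- The conditional probability `Δ_k = P(X_{λ_k+1} = 1 | X_0^{λ_k})`. -/
noncomputable def Delta (μ : Measure BSeq) (k : ℕ) : BSeq → ℝ := μ[Xnext k | Fk k]

/-- The recurrence time `R(l)` of the length-`(l+1)` past:
`R(l) = min {j ≥ l+1 : X_{-l-j}^{-j} = X_{-l}^0}`. -/
noncomputable def Rrec (l : ℕ) (ω : BSeq) : ℕ :=
  sInf {j : ℕ | l + 1 ≤ j ∧ ∀ i : ℕ, i ≤ l → ω (-(j : ℤ) - (i : ℤ)) = ω (-(i : ℤ))}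

/-- The probability of the block `x_0^n`. -/
noncomputable def blockProb (μ : Measure BSeq) (n : ℕ) (x : ℕ → Bool) : ENNReal :=
  μ {ω | ∀ i : ℕ, i ≤ n → ω (i : ℤ) = x i}

/-- The `n`-th entropy term `-(1/(n+1)) E log₂ p(X_0, …, X_n)`. -/
noncomputable def entropyTerm (μ : Measure BSeq) (n : ℕ) : ℝ :=
  -(1 / ((n : ℝ) + 1)) *
    ∫ ω, Real.logb 2 ((blockProb μ n (fun i => ω (i : ℤ))).toReal) ∂μ

-- ==================== auxiliary combinatorics ====================

def recSet (y : ℕ → Bool) (m : ℕ) : Set ℕ := {t : ℕ | 0 < t ∧ ∀ i : ℕ, i ≤ m → y (t + i) = y i}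

lemma hlam_succ (k : ℕ) (y : ℕ → Bool) :
    hlam (k + 1) y = hlam k y + sInf (recSet y (hlam k y)) := rfl

lemma hlam_mono (y : ℕ → Bool) : Monotone (fun k => hlam k y) :=
  monotone_nat_of_le_succ fun k => Nat.le_add_right _ _

lemma hlam_sub (y : ℕ → Bool) (j : ℕ) :
    ∀ k, j ≤ k → ∀ i, i ≤ hlam j y → y (hlam k y - i) = y (hlam j y - i) := by
  intro k
  induction k with
  | zero =>
    intro hj i _
    have : j = 0 := by omega
    subst this; rfl
  | succ k ih =>
    intro hj i hi
    rcases Nat.lt_or_ge j (k + 1) with h | h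
    · have hjk : j ≤ k := by omega
      have hik : i ≤ hlam k y := hi.trans (hlam_mono y hjk)
      have step : y (hlam (k + 1) y - i) = y (hlam k y - i) := by
        rw [hlam_succ]
        rcases (recSet y (hlam k y)).eq_empty_or_nonempty with he | hne
        · rw [he, Nat.sInf_empty]; simp
        · obtain ⟨hpos, hrec⟩ := Nat.sInf_mem hne
          have h1 : hlam k y + sInf (recSet y (hlam k y)) - i
              = sInf (recSet y (hlam k y)) + (hlam k y - i) := by omega
          rw [h1, hrec _ (Nat.sub_le _ _)]
      rw [step]; exact ih hjk i hi
    · have : j = k + 1 := by omega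
      subst this; rfl

lemma rev_hlam (a b : ℕ → Bool) (k : ℕ)
    (hpos : ∀ j, j < k → (recSet a (hlam j a)).Nonempty)
    (hb : ∀ i, i ≤ hlam k a → b i = a (hlam k a - i)) :
    ∀ j, j ≤ k → hlam j b = hlam j a := by
  intro j
  induction j with
  | zero => intro _; rfl
  | succ j ih =>
    intro hjk
    have hj : j ≤ k := by omega
    have hih := ih hj
    have hne := hpos j (by omega)
    obtain ⟨hτpos, hτrec⟩ := Nat.sInf_mem hne
    set h := hlam j a with hh
    set τ := sInf (recSet a h) with hτ
    have hsucc_a : hlam (j + 1) a = h + τ := rfl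
    have hle : hlam (j + 1) a ≤ hlam k a := hlam_mono a hjk
    have hleh : h ≤ hlam k a := hlam_mono a hj
    have key1 : ∀ u, u ≤ hlam (j + 1) a → b u = a (hlam (j + 1) a - u) := by
      intro u hu
      rw [hb u (hu.trans hle), hlam_sub a (j + 1) k hjk u hu]
    have key0 : ∀ u, u ≤ h → b u = a (h - u) := by
      intro u hu
      rw [hb u (hu.trans hleh), hlam_sub a j k hj u hu]
    have hmem : τ ∈ recSet b h := by
      refine ⟨hτpos, fun i hi => ?_⟩
      rw [key1 (τ + i) (by omega), key0 i hi]
      congr 1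
      omega
    have hmin : ∀ t, t < τ → t ∉ recSet b h := by
      rintro t ht ⟨htpos, htrec⟩
      have hmem' : (τ - t) ∈ recSet a h := by
        refine ⟨by omega, fun u hu => ?_⟩
        have hiu := htrec (h - u) (Nat.sub_le _ _)
        rw [key1 (t + (h - u)) (by omega), key0 (h - u) (Nat.sub_le _ _)] at hiu
        have e1 : hlam (j + 1) a - (t + (h - u)) = (τ - t) + u := by omega
        have e2 : h - (h - u) = u := by omega
        rw [e1, e2] at hiu
        exact hiu
      have := Nat.sInf_le hmem'
      omega
    have hinf : sInf (recSet b h) = τ := by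
      refine le_antisymm (Nat.sInf_le hmem) ?_
      by_contra hlt
      push_neg at hlt
      exact hmin _ hlt (Nat.sInf_mem ⟨τ, hmem⟩)
    rw [hlam_succ, hlam_succ, hih, ← hh, hinf, ← hτ]

def fut (ω : BSeq) : ℕ → Bool := fun j => ω (j : ℤ)

lemma lam_eq_hlam_fut (k : ℕ) (ω : BSeq) : lam k ω = hlam k (fut ω) := by
  induction k with
  | zero => rfl
  | succ k ih =>
    show lam k ω + sInf {t : ℕ | 0 < t ∧ ∀ i : ℕ, i ≤ lam k ω → ω ((t : ℤ) + (i : ℤ)) = ω (i : ℤ)}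
        = hlam k (fut ω) + sInf (recSet (fut ω) (hlam k (fut ω)))
    rw [ih]
    have hset : {t : ℕ | 0 < t ∧ ∀ i : ℕ, i ≤ hlam k (fut ω) → ω ((t : ℤ) + (i : ℤ)) = ω (i : ℤ)}
        = recSet (fut ω) (hlam k (fut ω)) := by
      ext t
      simp only [Set.mem_setOf_eq, recSet, fut]
      constructor <;> rintro ⟨h1, h2⟩ <;> refine ⟨h1, fun i hi => ?_⟩
      · have := h2 i hi; rwa [← Nat.cast_add] at this
      · have := h2 i hi; rwa [Nat.cast_add] at this
    rw [hset]

def Gfwd : Set BSeq :=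
  {ω | ∀ m : ℕ, ∃ t : ℕ, 0 < t ∧ ∀ i : ℕ, i ≤ m → ω ((t : ℤ) + (i : ℤ)) = ω (i : ℤ)}

def Gbwd : Set BSeq :=
  {ω | ∀ m : ℕ, ∃ t : ℕ, 0 < t ∧ ∀ i : ℕ, i ≤ m → ω (-(t : ℤ) - (i : ℤ)) = ω (-(i : ℤ))}

lemma Gfwd_nonempty {ω : BSeq} (hω : ω ∈ Gfwd) (m : ℕ) : (recSet (fut ω) m).Nonempty := by
  obtain ⟨t, ht, hrec⟩ := hω m
  exact ⟨t, ht, fun i hi => by simpa [fut, Nat.cast_add] using hrec i hi⟩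

lemma le_hlam_fut {ω : BSeq} (hω : ω ∈ Gfwd) : ∀ i, i ≤ hlam i (fut ω) := by
  intro i
  induction i with
  | zero => simp
  | succ i ih =>
    rw [hlam_succ]
    have := (Nat.sInf_mem (Gfwd_nonempty hω (hlam i (fut ω)))).1
    omega

lemma tilSeq_eq {ω : BSeq} (hω : ω ∈ Gfwd) (k : ℕ) :
    ∀ i, i ≤ hlam k (fut ω) → tilSeq ω i = fut ω (hlam k (fut ω) - i) := by
  intro i hi
  have h1 : i ≤ hlam i (fut ω) := le_hlam_fut hω i
  have h0 : tilSeq ω i = fut ω (hlam i (fut ω) - i) := by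
    show ω ((lam i ω : ℤ) - (i : ℤ)) = ω (((hlam i (fut ω) - i : ℕ) : ℤ))
    rw [lam_eq_hlam_fut]
    congr 1
    omega
  rw [h0]
  rcases le_total i k with h | h
  · exact (hlam_sub (fut ω) i k h i h1).symm
  · exact hlam_sub (fut ω) k i h i hi

lemma hlam_tilSeq {ω : BSeq} (hω : ω ∈ Gfwd) (k : ℕ) :
    hlam k (tilSeq ω) = hlam k (fut ω) :=
  rev_hlam (fut ω) (tilSeq ω) k (fun j _ => Gfwd_nonempty hω _) (tilSeq_eq hω k) k le_rfl

-- ==================== measurability ====================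

lemma measurable_memRecSet (t m : ℕ) : MeasurableSet {y : ℕ → Bool | t ∈ recSet y m} := by
  by_cases ht : 0 < t
  · have hset : {y : ℕ → Bool | t ∈ recSet y m}
        = ⋂ i ∈ Set.Iic m, {y : ℕ → Bool | y (t + i) = y i} := by
      ext y; simp [recSet, ht]
    rw [hset]
    refine MeasurableSet.biInter (Set.to_countable _) fun i _ => ?_
    have h2 : {y : ℕ → Bool | y (t + i) = y i}
        = ⋃ v : Bool, ((fun y : ℕ → Bool => y (t + i)) ⁻¹' {v}) ∩
            ((fun y : ℕ → Bool => y i) ⁻¹' {v}) := by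
      ext y
      simp only [Set.mem_setOf_eq, Set.mem_iUnion, Set.mem_inter_iff, Set.mem_preimage,
        Set.mem_singleton_iff]
      constructor
      · intro h; exact ⟨y i, h, rfl⟩
      · rintro ⟨v, h1, h2⟩; rw [h1, h2]
    rw [h2]
    exact MeasurableSet.iUnion fun v =>
      ((measurable_pi_apply (t + i) : Measurable fun y : ℕ → Bool => y (t + i))
          (measurableSet_singleton v)).inter
        ((measurable_pi_apply i : Measurable fun y : ℕ → Bool => y i)
          (measurableSet_singleton v))
  · have hset : {y : ℕ → Bool | t ∈ recSet y m} = ∅ := by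
      ext y; simp [recSet, ht]
    rw [hset]; exact MeasurableSet.empty

lemma measurable_sInf_recSet (m : ℕ) :
    Measurable (fun y : ℕ → Bool => sInf (recSet y m)) := by
  apply measurable_to_countable'
  intro c
  rcases Nat.eq_zero_or_pos c with rfl | hc
  · have hset : (fun y : ℕ → Bool => sInf (recSet y m)) ⁻¹' {0}
        = ⋂ t : ℕ, {y : ℕ → Bool | t ∈ recSet y m}ᶜ := by
      ext y
      simp only [Set.mem_preimage, Set.mem_singleton_iff, Set.mem_iInter, Set.mem_compl_iff]
      constructor
      · intro h0 t ht
        obtain ⟨h1, -⟩ := Nat.sInf_mem (⟨t, ht⟩ : (recSet y m).Nonempty)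
        omega
      · intro h
        have : recSet y m = ∅ := Set.eq_empty_iff_forall_notMem.mpr h
        rw [this, Nat.sInf_empty]
    rw [hset]
    exact MeasurableSet.iInter fun t => (measurable_memRecSet t m).compl
  · have hset : (fun y : ℕ → Bool => sInf (recSet y m)) ⁻¹' {c}
        = {y : ℕ → Bool | c ∈ recSet y m} ∩ ⋂ t ∈ Set.Iio c, {y : ℕ → Bool | t ∈ recSet y m}ᶜ := by
      ext y
      simp only [Set.mem_preimage, Set.mem_singleton_iff, Set.mem_inter_iff, Set.mem_setOf_eq,
        Set.mem_iInter, Set.mem_compl_iff, Set.mem_Iio]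
      constructor
      · intro h
        have hne : (recSet y m).Nonempty := by
          by_contra hne
          rw [Set.not_nonempty_iff_eq_empty] at hne
          rw [hne, Nat.sInf_empty] at h; omega
        refine ⟨?_, fun t ht => ?_⟩
        · rw [← h]; exact Nat.sInf_mem hne
        · rw [← h] at ht; exact Nat.notMem_of_lt_sInf ht
      · rintro ⟨hmem, hmin⟩
        exact le_antisymm (Nat.sInf_le hmem)
          (le_of_not_gt fun hlt => hmin _ hlt (Nat.sInf_mem ⟨c, hmem⟩))
    rw [hset]
    exact (measurable_memRecSet c m).inter
      (MeasurableSet.biInter (Set.to_countable _) fun t _ => (measurable_memRecSet t m).compl)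

lemma measurable_hlam (k : ℕ) : Measurable (fun y : ℕ → Bool => hlam k y) := by
  induction k with
  | zero => exact measurable_const
  | succ k ih =>
    have h2 : Measurable fun y : ℕ → Bool => sInf (recSet y (hlam k y)) := by
      apply measurable_to_countable'
      intro c
      have hset : (fun y : ℕ → Bool => sInf (recSet y (hlam k y))) ⁻¹' {c}
          = ⋃ m : ℕ, (((fun y : ℕ → Bool => hlam k y) ⁻¹' {m}) ∩
              ((fun y : ℕ → Bool => sInf (recSet y m)) ⁻¹' {c})) := by
        ext y
        simp only [Set.mem_preimage, Set.mem_singleton_iff, Set.mem_iUnion, Set.mem_inter_iff]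
        constructor
        · intro h; exact ⟨hlam k y, rfl, h⟩
        · rintro ⟨m, hm, h⟩; rw [← hm] at h; exact h
      rw [hset]
      exact MeasurableSet.iUnion fun m =>
        (ih (measurableSet_singleton m)).inter
          ((measurable_sInf_recSet m) (measurableSet_singleton c))
    exact ih.add h2

-- ==================== shift lemmas ====================

lemma shift_iterate (t : ℕ) : ∀ (ω : BSeq) (m : ℤ), (shift^[t]) ω m = ω (m + t) := by
  induction t with
  | zero => intro ω m; simp
  | succ t ih =>
    intro ω m
    rw [Function.iterate_succ_apply, ih (shift ω) m]
    show ω (m + t + 1) = ω (m + (t + 1 : ℕ))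
    congr 1
    push_cast
    ring

def shiftInv : BSeq → BSeq := fun ω n => ω (n - 1)

lemma shiftInv_iterate (t : ℕ) : ∀ (ω : BSeq) (m : ℤ), (shiftInv^[t]) ω m = ω (m - t) := by
  induction t with
  | zero => intro ω m; simp
  | succ t ih =>
    intro ω m
    rw [Function.iterate_succ_apply, ih (shiftInv ω) m]
    show ω (m - t - 1) = ω (m - (t + 1 : ℕ))
    congr 1
    push_cast
    ring

def shiftME : BSeq ≃ᵐ BSeq where
  toFun := shift
  invFun := shiftInv
  left_inv := fun ω => funext fun m => by show ω (m - 1 + 1) = ω m; congr 1; ring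
  right_inv := fun ω => funext fun m => by show ω (m + 1 - 1) = ω m; congr 1; ring
  measurable_toFun := measurable_pi_lambda _ fun m => measurable_pi_apply _
  measurable_invFun := measurable_pi_lambda _ fun m => measurable_pi_apply _

-- ==================== Poincaré recurrence ====================

lemma Gfwd_conull (μ : Measure BSeq) [IsProbabilityMeasure μ]
    (hstat : MeasurePreserving shift μ μ) : μ Gfwdᶜ = 0 := by
  have hcons : Conservative shift μ := hstat.conservative
  have hsub : Gfwdᶜ ⊆ ⋃ m : ℕ, ⋃ p : Fin (m + 1) → Bool,
      {ω : BSeq | ω ∈ {ω' : BSeq | ∀ i : Fin (m + 1), ω' ((i : ℕ) : ℤ) = p i} ∧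
        ∀ t : ℕ, t ≥ 1 →
          shift^[t] ω ∉ {ω' : BSeq | ∀ i : Fin (m + 1), ω' ((i : ℕ) : ℤ) = p i}} := by
    intro ω hω
    simp only [Gfwd, Set.mem_compl_iff, Set.mem_setOf_eq, not_forall] at hω
    obtain ⟨m, hm⟩ := hω
    push_neg at hm
    refine Set.mem_iUnion.mpr ⟨m, Set.mem_iUnion.mpr
      ⟨fun i => ω ((i : ℕ) : ℤ), fun i => rfl, ?_⟩⟩
    intro t ht hmem
    obtain ⟨i, hi, hne⟩ := hm t (by omega)
    apply hne
    have h2 := hmem ⟨i, by omega⟩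
    simp only [Set.mem_setOf_eq] at h2
    rw [shift_iterate] at h2
    rw [← h2]
    congr 1
    ring
  refine measure_mono_null hsub (measure_iUnion_null fun m => measure_iUnion_null fun p => ?_)
  have hCmeas : MeasurableSet {ω' : BSeq | ∀ i : Fin (m + 1), ω' ((i : ℕ) : ℤ) = p i} := by
    have : {ω' : BSeq | ∀ i : Fin (m + 1), ω' ((i : ℕ) : ℤ) = p i}
        = ⋂ i : Fin (m + 1), (fun ω' : BSeq => ω' ((i : ℕ) : ℤ)) ⁻¹' {p i} := by
      ext ω'; simp [Set.mem_iInter]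
    rw [this]
    exact MeasurableSet.iInter fun i =>
      (measurable_pi_apply _) (measurableSet_singleton _)
  exact measure_mono_null (fun ω h => h)
    (hcons.measure_mem_forall_ge_image_notMem_eq_zero hCmeas.nullMeasurableSet 1)

lemma Gbwd_conull (μ : Measure BSeq) [IsProbabilityMeasure μ]
    (hinv : MeasurePreserving shiftInv μ μ) : μ Gbwdᶜ = 0 := by
  have hcons : Conservative shiftInv μ := hinv.conservative
  have hsub : Gbwdᶜ ⊆ ⋃ m : ℕ, ⋃ p : Fin (m + 1) → Bool,
      {ω : BSeq | ω ∈ {ω' : BSeq | ∀ i : Fin (m + 1), ω' (-((i : ℕ) : ℤ)) = p i} ∧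
        ∀ t : ℕ, t ≥ 1 →
          shiftInv^[t] ω ∉ {ω' : BSeq | ∀ i : Fin (m + 1), ω' (-((i : ℕ) : ℤ)) = p i}} := by
    intro ω hω
    simp only [Gbwd, Set.mem_compl_iff, Set.mem_setOf_eq, not_forall] at hω
    obtain ⟨m, hm⟩ := hω
    push_neg at hm
    refine Set.mem_iUnion.mpr ⟨m, Set.mem_iUnion.mpr
      ⟨fun i => ω (-((i : ℕ) : ℤ)), fun i => rfl, ?_⟩⟩
    intro t ht hmem
    obtain ⟨i, hi, hne⟩ := hm t (by omega)
    apply hne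
    have h2 := hmem ⟨i, by omega⟩
    simp only [Set.mem_setOf_eq] at h2
    rw [shiftInv_iterate] at h2
    rw [← h2]
    congr 1
    ring
  refine measure_mono_null hsub (measure_iUnion_null fun m => measure_iUnion_null fun p => ?_)
  have hCmeas : MeasurableSet {ω' : BSeq | ∀ i : Fin (m + 1), ω' (-((i : ℕ) : ℤ)) = p i} := by
    have : {ω' : BSeq | ∀ i : Fin (m + 1), ω' (-((i : ℕ) : ℤ)) = p i}
        = ⋂ i : Fin (m + 1), (fun ω' : BSeq => ω' (-((i : ℕ) : ℤ))) ⁻¹' {p i} := by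
      ext ω'; simp [Set.mem_iInter]
    rw [this]
    exact MeasurableSet.iInter fun i =>
      (measurable_pi_apply _) (measurableSet_singleton _)
  exact measure_mono_null (fun ω h => h)
    (hcons.measure_mem_forall_ge_image_notMem_eq_zero hCmeas.nullMeasurableSet 1)


/-- For every `k ≥ 1`, `n ≥ 0` and binary string `x_{-n}^0`,
`P(X̃_{-n}^0 = x_{-n}^0, λ̂_k(X̃_{-∞}^0) = n) = P(X_{-n}^0 = x_{-n}^0, λ̂_k(X_{-∞}^0) = n)`.
(Here `x j` stands for `x_{-j}`.) -/
theorem tilde_joint_law (μ : Measure BSeq) [IsProbabilityMeasure μ]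
    (hstat : MeasurePreserving shift μ μ) (k : ℕ) (hk : 1 ≤ k) (n : ℕ) (x : ℕ → Bool) :
    μ {ω | (∀ i : ℕ, i ≤ n → tilSeq ω i = x i) ∧ hlam k (tilSeq ω) = n} =
      μ {ω | (∀ i : ℕ, i ≤ n → past ω i = x i) ∧ hlam k (past ω) = n} := by
  classical
  have hT : MeasurePreserving (shift^[n]) μ μ := hstat.iterate n
  set B : Set BSeq := {ω | (∀ i : ℕ, i ≤ n → past ω i = x i) ∧ hlam k (past ω) = n} with hBdef
  set A : Set BSeq := {ω | (∀ i : ℕ, i ≤ n → tilSeq ω i = x i) ∧ hlam k (tilSeq ω) = n}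
    with hAdef
  set A' : Set BSeq :=
    {ω | (∀ i : ℕ, i ≤ n → ω ((n : ℤ) - (i : ℤ)) = x i) ∧ hlam k (fut ω) = n} with hA'def
  have hGae : ∀ᵐ ω ∂μ, ω ∈ Gfwd := by
    rw [MeasureTheory.ae_iff]
    exact measure_mono_null (fun ω h => h) (Gfwd_conull μ hstat)
  have hinv : MeasurePreserving shiftInv μ μ := MeasurePreserving.symm shiftME hstat
  have hG'ae : ∀ᵐ ω ∂μ, shift^[n] ω ∈ Gbwd := by
    rw [MeasureTheory.ae_iff]
    have hsub : {ω : BSeq | ¬shift^[n] ω ∈ Gbwd} ⊆ shift^[n] ⁻¹' Gbwdᶜ := fun ω h => h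
    exact measure_mono_null hsub
      (hT.quasiMeasurePreserving.preimage_null (Gbwd_conull μ hinv))
  have step1 : ∀ ω ∈ Gfwd, (ω ∈ A ↔ ω ∈ A') := by
    intro ω hω
    have e0 : hlam k (tilSeq ω) = hlam k (fut ω) := hlam_tilSeq hω k
    constructor
    · rintro ⟨hmatch, hl⟩
      have hn : hlam k (fut ω) = n := by rw [← e0]; exact hl
      refine ⟨fun i hi => ?_, hn⟩
      have hts := tilSeq_eq hω k i (by omega)
      rw [hn] at hts
      rw [← hmatch i hi, hts]
      show ω ((n : ℤ) - (i : ℤ)) = ω (((n - i : ℕ) : ℤ))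
      congr 1; omega
    · rintro ⟨hmatch, hn⟩
      refine ⟨fun i hi => ?_, by rw [e0]; exact hn⟩
      have hts := tilSeq_eq hω k i (by omega)
      rw [hn] at hts
      rw [hts, ← hmatch i hi]
      show ω (((n - i : ℕ) : ℤ)) = ω ((n : ℤ) - (i : ℤ))
      congr 1; omega
  have step2 : ∀ ω, ω ∈ Gfwd → shift^[n] ω ∈ Gbwd → (ω ∈ A' ↔ ω ∈ shift^[n] ⁻¹' B) := by
    intro ω hωf hωb
    set b : ℕ → Bool := fun i : ℕ => ω ((n : ℤ) - (i : ℤ)) with hbdef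
    have hpast : past (shift^[n] ω) = b := by
      funext i
      show (shift^[n]) ω (-(i : ℤ)) = ω ((n : ℤ) - (i : ℤ))
      rw [shift_iterate]; congr 1; ring
    have hTmem : ω ∈ shift^[n] ⁻¹' B ↔ ((∀ i : ℕ, i ≤ n → b i = x i) ∧ hlam k b = n) := by
      show ((∀ i : ℕ, i ≤ n → past (shift^[n] ω) i = x i) ∧ hlam k (past (shift^[n] ω)) = n) ↔ _
      rw [hpast]
    have hbpos : ∀ m, (recSet b m).Nonempty := by
      intro m
      obtain ⟨t, ht, hrec⟩ := hωb m
      refine ⟨t, ht, fun i hi => ?_⟩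
      have h2 := hrec i hi
      rw [shift_iterate, shift_iterate] at h2
      show ω ((n : ℤ) - ((t + i : ℕ) : ℤ)) = ω ((n : ℤ) - (i : ℤ))
      have l1 : (n : ℤ) - ((t + i : ℕ) : ℤ) = -(t : ℤ) - (i : ℤ) + n := by push_cast; ring
      have l2 : (n : ℤ) - (i : ℤ) = -(i : ℤ) + n := by ring
      rw [l1, l2]
      exact h2
    have hapos : ∀ m, (recSet (fut ω) m).Nonempty := Gfwd_nonempty hωf
    rw [hTmem]
    constructor
    · rintro ⟨hmatch, hn⟩
      have hb : ∀ i, i ≤ hlam k (fut ω) → b i = fut ω (hlam k (fut ω) - i) := by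
        intro i hi
        rw [hn] at hi ⊢
        show ω ((n : ℤ) - (i : ℤ)) = ω (((n - i : ℕ) : ℤ))
        congr 1; omega
      have heq := rev_hlam (fut ω) b k (fun j _ => hapos _) hb k le_rfl
      exact ⟨fun i hi => hmatch i hi, by rw [heq]; exact hn⟩
    · rintro ⟨hmatch, hn⟩
      have hb : ∀ i, i ≤ hlam k b → fut ω i = b (hlam k b - i) := by
        intro i hi
        rw [hn] at hi ⊢
        show ω ((i : ℕ) : ℤ) = ω ((n : ℤ) - ((n - i : ℕ) : ℤ))
        congr 1; omega
      have heq := rev_hlam b (fut ω) k (fun j _ => hbpos _) hb k le_rfl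
      exact ⟨fun i hi => hmatch i hi, by rw [heq]; exact hn⟩
  have hpastm : Measurable past := measurable_pi_lambda _ fun j => measurable_pi_apply _
  have hBmeas : MeasurableSet B := by
    have h1 : MeasurableSet {ω : BSeq | ∀ i : ℕ, i ≤ n → past ω i = x i} := by
      have hs : {ω : BSeq | ∀ i : ℕ, i ≤ n → past ω i = x i}
          = ⋂ i ∈ Set.Iic n, (fun ω : BSeq => past ω i) ⁻¹' {x i} := by
        ext ω; simp [Set.mem_iInter]
      rw [hs]
      exact MeasurableSet.biInter (Set.to_countable _) fun i _ =>
        ((measurable_pi_apply i).comp hpastm) (measurableSet_singleton _)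
    have h2 : MeasurableSet {ω : BSeq | hlam k (past ω) = n} :=
      ((measurable_hlam k).comp hpastm) (measurableSet_singleton n)
    have hs2 : B = {ω : BSeq | ∀ i : ℕ, i ≤ n → past ω i = x i}
        ∩ {ω : BSeq | hlam k (past ω) = n} := rfl
    rw [hs2]; exact h1.inter h2
  have e1 : μ A = μ A' := by
    apply measure_congr
    rw [Filter.eventuallyEq_set]
    filter_upwards [hGae] with ω hω
    exact step1 ω hω
  have e2 : μ A' = μ (shift^[n] ⁻¹' B) := by
    apply measure_congr
    rw [Filter.eventuallyEq_set]
    filter_upwards [hGae, hG'ae] with ω h1 h2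
    exact step2 ω h1 h2
  have e3 : μ (shift^[n] ⁻¹' B) = μ B := hT.measure_preimage hBmeas.nullMeasurableSet
  exact e1.trans (e2.trans e3)
end

section
/- Let {X_n} be stationary ergodic binary. If the backward return times τ̂_k satisfy R(τ̂_{k+1} − 1) ≤ τ̂_{k+1} infinitely often and τ̂_k → ∞, then the process entropy H equals 0, where R(l) is the recurrence time of the length-(l+1) past. -/
open MeasureTheory Filter Finset

open scoped ENNReal

namespace EZ

attribute [local instance] Classical.propDecidable

/-- square condition at the top of the list: the first `n` entries repeat. -/
def SqC (N : ℕ) (s : List Bool) (n : ℕ) : Prop :=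
  N ≤ n ∧ 1 ≤ n ∧ 2 * n ≤ s.length ∧ s.take n = (s.drop n).take n

def good (N : ℕ) (s : List Bool) : Prop := ∃ n, SqC N s n

noncomputable def qmin (N : ℕ) (s : List Bool) : ℕ := sInf {n | SqC N s n}

lemma qmin_mem {N : ℕ} {s : List Bool} (h : good N s) : SqC N s (qmin N s) :=
  Nat.sInf_mem h

lemma not_good_nil {N : ℕ} : ¬ good N [] := by
  rintro ⟨n, -, h1, h2, -⟩
  simp at h2; omega

noncomputable def badcount (N : ℕ) : List Bool → ℕ
  | [] => 0
  | b :: rest =>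
    if h : good N (b :: rest) then
      badcount N ((b :: rest).drop (qmin N (b :: rest)))
    else 1 + badcount N rest
termination_by s => s.length
decreasing_by
  · have hm := qmin_mem h
    have h1 : 1 ≤ qmin N (b :: rest) := hm.2.1
    simp only [List.length_drop, List.length_cons]
    omega
  · simp

lemma badcount_nil (N : ℕ) : badcount N [] = 0 := by rw [badcount]

lemma badcount_good {N : ℕ} {s : List Bool} (h : good N s) :
    badcount N s = badcount N (s.drop (qmin N s)) := by
  cases s with
  | nil => exact absurd h not_good_nil
  | cons b rest => rw [badcount, dif_pos h]

lemma badcount_bad {N : ℕ} {b : Bool} {rest : List Bool} (h : ¬ good N (b :: rest)) :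
    badcount N (b :: rest) = 1 + badcount N rest := by
  rw [badcount, dif_neg h]

/-- `badcount` is at most the number of suffixes with no square on top. -/
lemma badcount_le_filter (N : ℕ) (s : List Bool) :
    badcount N s ≤ ((range s.length).filter (fun j => ¬ good N (s.drop j))).card := by
  suffices h : ∀ m (s : List Bool), s.length = m →
      badcount N s ≤ ((range s.length).filter (fun j => ¬ good N (s.drop j))).card from
    h s.length s rfl
  intro m
  induction m using Nat.strong_induction_on with
  | _ m IH =>
  intro s hl
  subst hl
  cases s with
  | nil => simp [badcount_nil]
  | cons b rest =>
    by_cases h : good N (b :: rest)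
    · rw [badcount_good h]
      set s := b :: rest with hs
      set q := qmin N s with hq
      have hm := qmin_mem h
      have h1 : 1 ≤ q := hm.2.1
      have h2 : 2 * q ≤ s.length := hm.2.2.1
      have hlen : (s.drop q).length < s.length := by
        simp only [List.length_drop]; omega
      refine (IH _ hlen _ rfl).trans ?_
      apply Finset.card_le_card_of_injOn (fun j => j + q)
      · intro j hj
        simp only [Finset.mem_coe, Finset.mem_filter, Finset.mem_range, List.length_drop] at hj ⊢
        constructor
        · omega
        · rw [List.drop_drop] at hj
          convert hj.2 using 3
          omega
      · intro a _ b _ hab; simp only [] at hab; omega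
    · rw [badcount_bad h]
      have hr := IH rest.length (by simp) rest rfl
      have hsub : ((range rest.length).filter (fun j => ¬ good N (rest.drop j))).card
          ≤ (((range (b :: rest).length).filter
              (fun j => ¬ good N ((b :: rest).drop j))).erase 0).card := by
        apply Finset.card_le_card_of_injOn (fun j => j + 1)
        · intro j hj
          simp only [Finset.mem_coe, Finset.mem_filter, Finset.mem_range, Finset.mem_erase] at hj ⊢
          refine ⟨by omega, by simpa using hj.1, by simpa using hj.2⟩
        · intro a _ b _ hab; simp only [] at hab; omega
      have h0 : 0 ∈ (range (b :: rest).length).filter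
          (fun j => ¬ good N ((b :: rest).drop j)) := by
        simp only [Finset.mem_filter, Finset.mem_range]
        exact ⟨by simp, by simpa using h⟩
      have := Finset.card_erase_add_one h0
      omega

/-- all strings of length m (as a Finset) -/
def strs : ℕ → Finset (List Bool)
  | 0 => {[]}
  | m + 1 => (strs m).biUnion (fun l => {true :: l, false :: l})

lemma mem_strs : ∀ {m : ℕ} {l : List Bool}, l ∈ strs m ↔ l.length = m := by
  intro m
  induction m with
  | zero => intro l; simp [strs, List.length_eq_zero_iff]
  | succ m IH =>
    intro l
    simp only [strs, Finset.mem_biUnion]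
    constructor
    · rintro ⟨u, hu, hl⟩
      have : l = true :: u ∨ l = false :: u := by
        simpa [Finset.mem_insert, Finset.mem_singleton] using hl
      rcases this with rfl | rfl <;> simp [IH.mp hu]
    · intro hl
      cases l with
      | nil => simp at hl
      | cons b rest =>
        refine ⟨rest, IH.mpr (by simpa using hl), ?_⟩
        cases b <;> simp

lemma card_strs_le (m : ℕ) : (strs m).card ≤ 2 ^ m := by
  induction m with
  | zero => simp [strs]
  | succ m IH =>
    calc (strs (m+1)).card ≤ ∑ l ∈ strs m, ({true :: l, false :: l} : Finset (List Bool)).card :=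
          Finset.card_biUnion_le
    _ ≤ ∑ _l ∈ strs m, 2 := Finset.sum_le_sum (fun l _ => Finset.card_insert_le _ _ |>.trans (by simp))
    _ ≤ 2 ^ m * 2 := by rw [Finset.sum_const, smul_eq_mul]; exact Nat.mul_le_mul_right 2 IH
    _ = 2 ^ (m + 1) := by ring

-- the base of the counting bound
noncomputable def cc (r : ℕ) : ℝ := (2 : ℝ) ^ ((r : ℝ)⁻¹)

lemma cc_pos (r : ℕ) : 0 < cc r := Real.rpow_pos_of_pos (by norm_num) _

lemma cc_le_two (r : ℕ) : cc r ≤ 2 := by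
  have : cc r ≤ (2:ℝ) ^ (1:ℝ) := by
    apply Real.rpow_le_rpow_of_exponent_le (by norm_num)
    rcases Nat.eq_zero_or_pos r with h | h
    · simp [h]
    · rw [inv_le_one_iff₀]; right; exact_mod_cast Nat.one_le_cast.mpr h
  simpa using this

lemma one_lt_cc {r : ℕ} (hr : 1 ≤ r) : 1 < cc r := by
  have h0 : (0:ℝ) < (r:ℝ)⁻¹ := by
    have : (0:ℝ) < r := by exact_mod_cast hr
    positivity
  exact (Real.one_lt_rpow_iff_of_pos (by norm_num)).mpr (Or.inl ⟨by norm_num, h0⟩)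

lemma cc_lb {r : ℕ} (hr : 1 ≤ r) : 1 + 1 / (2 * (r:ℝ)) ≤ cc r := by
  have hrpos : (0:ℝ) < r := by exact_mod_cast hr
  have hr0 : (r:ℝ) ≠ 0 := ne_of_gt hrpos
  have h1 : cc r = Real.exp ((r:ℝ)⁻¹ * Real.log 2) := by
    rw [cc, Real.rpow_def_of_pos (by norm_num)]
    ring_nf
  have h2 : 1 + (r:ℝ)⁻¹ * Real.log 2 ≤ Real.exp ((r:ℝ)⁻¹ * Real.log 2) := by
    have := Real.add_one_le_exp ((r:ℝ)⁻¹ * Real.log 2)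
    linarith
  have h3 : 1 / (2 * (r:ℝ)) ≤ (r:ℝ)⁻¹ * Real.log 2 := by
    have hlog : (1:ℝ)/2 ≤ Real.log 2 := by
      have := Real.log_two_gt_d9
      linarith
    have heq : 1 / (2*(r:ℝ)) = (r:ℝ)⁻¹ * (1/2) := by
      field_simp
    rw [heq]
    exact mul_le_mul_of_nonneg_left hlog (by positivity)
  rw [h1] at *
  linarith

lemma cc_pow_eq (r : ℕ) (n : ℕ) : (cc r) ^ n = (2:ℝ) ^ ((n : ℝ) / r) := by
  rw [cc, ← Real.rpow_natCast ((2:ℝ) ^ ((r:ℝ)⁻¹)) n, ← Real.rpow_mul (by norm_num)]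
  congr 1
  field_simp

/-- key numeric inequality: `2c ≤ c^N (c-1)` for `N = 3r²`. -/
lemma cc_key {r : ℕ} (hr : 2 ≤ r) : 2 * cc r ≤ (cc r) ^ (3 * r^2) * (cc r - 1) := by
  have hr1 : 1 ≤ r := by omega
  have hrpos : (0:ℝ) < r := by exact_mod_cast hr1
  have h1 : (cc r) ^ (3 * r ^ 2) = (2:ℝ) ^ ((3 * r : ℕ) : ℝ) := by
    rw [cc_pow_eq]
    congr 1
    push_cast
    field_simp
  have h2 : ((2:ℝ) ^ ((3 * r : ℕ) : ℝ)) = ((2:ℕ) ^ (3*r) : ℕ) := by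
    rw [Real.rpow_natCast]
    push_cast
    ring
  have h3 : (8 * r : ℝ) ≤ ((2:ℕ) ^ (3*r) : ℕ) := by
    have : 8 * r ≤ 2 ^ (3 * r) := by
      calc 8 * r ≤ 8 * 2 ^ r := by
            have := Nat.lt_two_pow_self (n := r)
            omega
      _ = 2 ^ (r + 3) := by ring
      _ ≤ 2 ^ (3 * r) := Nat.pow_le_pow_right (by norm_num) (by omega)
    exact_mod_cast this
  have h4 : 1 / (2 * (r:ℝ)) ≤ cc r - 1 := by
    have := cc_lb hr1
    linarith
  have h5 : (0:ℝ) < 1 / (2 * (r:ℝ)) := by positivity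
  have h6 : (0:ℝ) ≤ (cc r) ^ (3 * r^2) := pow_nonneg (le_of_lt (cc_pos r)) _
  calc 2 * cc r ≤ 4 := by have := cc_le_two r; have := cc_pos r; linarith
  _ = (8 * (r:ℝ)) * (1 / (2 * (r:ℝ))) := by field_simp; ring
  _ ≤ (cc r) ^ (3 * r^2) * (cc r - 1) := by
      apply mul_le_mul ?_ h4 (le_of_lt h5) h6
      rw [h1, h2]; exact h3

lemma geom_bound {r : ℕ} (hr : 2 ≤ r) (m : ℕ) :
    (∑ n ∈ Icc (3*r^2) m, (cc r) ^ (m - n)) ≤ (cc r) ^ m / 2 := by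
  set N := 3 * r^2 with hN
  set c := cc r with hc
  have hc1 : 1 < c := one_lt_cc (by omega)
  have hc0 : 0 < c := cc_pos r
  by_cases hm : m < N
  · rw [Finset.Icc_eq_empty (by omega)]
    simp only [Finset.sum_empty]
    positivity
  push_neg at hm
  have hinj : ∀ a ∈ Icc N m, ∀ b ∈ Icc N m, m - a = m - b → a = b := by
    intro a ha b hb hab
    simp only [Finset.mem_Icc] at ha hb
    omega
  have step1 : (∑ n ∈ Icc N m, c ^ (m - n)) ≤ ∑ j ∈ range (m - N + 1), c ^ j := by
    calc (∑ n ∈ Icc N m, c ^ (m - n))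
        = ∑ j ∈ (Icc N m).image (fun n => m - n), c ^ j := (Finset.sum_image hinj).symm
    _ ≤ ∑ j ∈ range (m - N + 1), c ^ j := by
        apply Finset.sum_le_sum_of_subset_of_nonneg
        · intro j hj
          simp only [Finset.mem_image, Finset.mem_Icc, Finset.mem_range] at hj ⊢
          obtain ⟨n, ⟨h1', h2'⟩, rfl⟩ := hj
          omega
        · intro j _ _
          positivity
  have step2 : (∑ j ∈ range (m - N + 1), c ^ j) = (c ^ (m - N + 1) - 1)/(c - 1) :=
    geom_sum_eq (by linarith) _
  have step3 : (c ^ (m - N + 1) - 1)/(c - 1) ≤ c ^ (m - N + 1) / (c - 1) := by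
    gcongr
    · linarith
  have step4 : c ^ (m - N + 1) / (c - 1) ≤ c ^ m / 2 := by
    rw [div_le_div_iff₀ (by linarith) (by norm_num)]
    have hsplit : c ^ m = c ^ (m - N) * c ^ N := by
      rw [← pow_add]
      congr 1
      omega
    have hsplit2 : c ^ (m - N + 1) = c ^ (m - N) * c := by
      rw [pow_succ]
    have hkey := mul_le_mul_of_nonneg_left (cc_key hr) (le_of_lt (pow_pos hc0 (m - N)))
    rw [← hc, ← hN] at hkey
    rw [hsplit, hsplit2]
    ring_nf
    ring_nf at hkey
    linarith
  linarith

/-- Main counting bound: strings of length `m` with at most `B` bad positions are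
at most `4^B c^m` many. -/
lemma count_main {r : ℕ} (hr : 2 ≤ r) :
    ∀ m B, (((strs m).filter (fun s => badcount (3*r^2) s ≤ B)).card : ℝ)
      ≤ 4 ^ B * (cc r) ^ m := by
  set N := 3 * r ^ 2 with hN
  set c := cc r with hc
  have hN1 : 1 ≤ N := by
    have h1 : 1 ≤ r := by omega
    have : 1 ≤ r ^ 2 := Nat.one_le_pow _ _ (by omega)
    omega
  have hc0 : 0 < c := cc_pos r
  have hc1 : 1 < c := one_lt_cc (by omega)
  intro m
  induction m using Nat.strong_induction_on with
  | _ m IH =>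
  intro B
  have hpow4 : (1:ℝ) ≤ 4 ^ B := one_le_pow₀ (by norm_num)
  rcases Nat.eq_zero_or_pos m with rfl | hm
  · calc (((strs 0).filter (fun s => badcount N s ≤ B)).card : ℝ)
        ≤ ((strs 0).card : ℝ) := by exact_mod_cast Finset.card_filter_le _ _
    _ = 1 := by norm_num [strs]
    _ ≤ 4 ^ B * c ^ 0 := by simpa using hpow4
  obtain ⟨m', rfl⟩ : ∃ m', m = m' + 1 := ⟨m - 1, by omega⟩
  set m := m' + 1 with hm'
  set F := (strs m).filter (fun s => badcount N s ≤ B) with hF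
  have hsplit : (F.filter (fun s => good N s)).card
      + (F.filter (fun s => ¬ good N s)).card = F.card :=
    Finset.card_filter_add_card_filter_not (p := fun s => good N s)
  set Fg := F.filter (fun s => good N s) with hFg
  set Fb := F.filter (fun s => ¬ good N s) with hFb
  -- bad part bound
  have hbadpart : (Fb.card : ℝ) ≤ (1/2) * 4 ^ B * c ^ m := by
    rcases Nat.eq_zero_or_pos B with rfl | hB
    · have : Fb = ∅ := by
        apply Finset.eq_empty_of_forall_notMem
        intro s hs
        simp only [hFb, hF, Finset.mem_filter] at hs
        obtain ⟨⟨hmem, hbc⟩, hng⟩ := hs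
        have hlen : s.length = m := mem_strs.mp hmem
        cases s with
        | nil => simp [hm'] at hlen
        | cons b rest =>
          rw [badcount_bad hng] at hbc
          omega
      rw [this]
      simp only [Finset.card_empty, Nat.cast_zero]
      positivity
    obtain ⟨B', rfl⟩ : ∃ B', B = B' + 1 := ⟨B - 1, by omega⟩
    have hsub : Fb ⊆ ((strs m').filter (fun u => badcount N u ≤ B')).biUnion
        (fun l => {true :: l, false :: l}) := by
      intro s hs
      simp only [hFb, hF, Finset.mem_filter] at hs
      obtain ⟨⟨hmem, hbc⟩, hng⟩ := hs
      have hlen : s.length = m := mem_strs.mp hmem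
      cases s with
      | nil => simp [hm'] at hlen
      | cons b rest =>
        rw [badcount_bad hng] at hbc
        simp only [Finset.mem_biUnion, Finset.mem_filter]
        refine ⟨rest, ⟨mem_strs.mpr (by simpa [hm'] using hlen), by omega⟩, ?_⟩
        cases b <;> simp
    have hcard : Fb.card ≤ 2 * ((strs m').filter (fun u => badcount N u ≤ B')).card := by
      calc Fb.card ≤ (((strs m').filter (fun u => badcount N u ≤ B')).biUnion
          (fun l => {true :: l, false :: l})).card := Finset.card_le_card hsub
      _ ≤ ∑ l ∈ (strs m').filter (fun u => badcount N u ≤ B'),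
            ({true :: l, false :: l} : Finset (List Bool)).card := Finset.card_biUnion_le
      _ ≤ ∑ _l ∈ (strs m').filter (fun u => badcount N u ≤ B'), 2 :=
          Finset.sum_le_sum (fun l _ => (Finset.card_insert_le _ _).trans (by simp))
      _ = 2 * ((strs m').filter (fun u => badcount N u ≤ B')).card := by
          rw [Finset.sum_const, smul_eq_mul, Nat.mul_comm]
    have hIH := IH m' (by omega) B'
    have hcm : c ^ m' ≤ c ^ m :=
      pow_le_pow_right₀ (le_of_lt hc1) (by omega)
    calc (Fb.card : ℝ) ≤ 2 * (((strs m').filter (fun u => badcount N u ≤ B')).card : ℝ) := by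
          exact_mod_cast hcard
    _ ≤ 2 * (4 ^ B' * c ^ m') := by linarith
    _ = (1/2) * 4 ^ (B' + 1) * c ^ m' := by ring
    _ ≤ (1/2) * 4 ^ (B' + 1) * c ^ m := by
        have h4 : (0:ℝ) < (1/2) * 4 ^ (B' + 1) := by positivity
        nlinarith
  -- good part bound
  have hgoodpart : (Fg.card : ℝ) ≤ 4 ^ B * (c ^ m / 2) := by
    have hsub : Fg ⊆ (Icc N m).biUnion (fun n =>
        ((strs (m - n)).filter (fun u => badcount N u ≤ B)).image
          (fun u => u.take n ++ u)) := by
      intro s hs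
      simp only [hFg, hF, Finset.mem_filter] at hs
      obtain ⟨⟨hmem, hbc⟩, hg⟩ := hs
      have hlen : s.length = m := mem_strs.mp hmem
      have hq := qmin_mem hg
      obtain ⟨hqN, hq1, hq2, hqe⟩ := hq
      set q := qmin N s with hqd
      simp only [Finset.mem_biUnion, Finset.mem_Icc, Finset.mem_image, Finset.mem_filter]
      refine ⟨q, ⟨hqN, by omega⟩, s.drop q, ⟨mem_strs.mpr (by simp [hlen]), ?_⟩, ?_⟩
      · rw [← badcount_good hg]; exact hbc
      · rw [← hqe]
        exact List.take_append_drop q s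
    calc (Fg.card : ℝ) ≤ (((Icc N m).biUnion (fun n =>
          ((strs (m - n)).filter (fun u => badcount N u ≤ B)).image
            (fun u => u.take n ++ u))).card : ℝ) := by
          exact_mod_cast Finset.card_le_card hsub
    _ ≤ ((∑ n ∈ Icc N m, (((strs (m - n)).filter (fun u => badcount N u ≤ B)).image
            (fun u => u.take n ++ u)).card : ℕ) : ℝ) := by
          exact_mod_cast Finset.card_biUnion_le
    _ ≤ ∑ n ∈ Icc N m, (((strs (m - n)).filter (fun u => badcount N u ≤ B)).card : ℝ) := by
          rw [Nat.cast_sum]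
          apply Finset.sum_le_sum
          intro n _
          exact_mod_cast Finset.card_image_le
    _ ≤ ∑ n ∈ Icc N m, 4 ^ B * c ^ (m - n) := by
          apply Finset.sum_le_sum
          intro n hn
          simp only [Finset.mem_Icc] at hn
          exact IH (m - n) (by omega) B
    _ = 4 ^ B * ∑ n ∈ Icc N m, c ^ (m - n) := by rw [Finset.mul_sum]
    _ ≤ 4 ^ B * (c ^ m / 2) := by
          have := geom_bound hr m
          have h4 : (0:ℝ) ≤ 4 ^ B := by positivity
          rw [← hN, ← hc] at *
          nlinarith
  have : (F.card : ℝ) = (Fg.card : ℝ) + (Fb.card : ℝ) := by exact_mod_cast hsplit.symm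
  rw [this]
  linarith [hgoodpart, hbadpart]

/-- the word `ω_t, ω_{t-1}, …, ω_{t-m+1}` -/
def seg (ω : BSeq) (t : ℤ) (m : ℕ) : List Bool :=
  (List.range m).map (fun i : ℕ => ω (t - (i:ℤ)))

lemma seg_length (ω : BSeq) (t : ℤ) (m : ℕ) : (seg ω t m).length = m := by
  rw [seg, List.length_map, List.length_range]

def wl (M : ℕ) (ω : BSeq) : List Bool := seg ω (M : ℤ) (M + 1)

lemma wl_length (M : ℕ) (ω : BSeq) : (wl M ω).length = M + 1 := by
  rw [wl, seg_length]

lemma wl_mem_strs (M : ℕ) (ω : BSeq) : wl M ω ∈ strs (M+1) :=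
  mem_strs.mpr (wl_length _ _)

def Cyl (M : ℕ) (w : List Bool) : Set BSeq := {ω | wl M ω = w}

lemma mem_Cyl_iff {M : ℕ} {w : List Bool} (hw : w.length = M + 1) (ω : BSeq) :
    ω ∈ Cyl M w ↔ ∀ j, j ≤ M → ω ((M : ℤ) - (j:ℤ)) = w.getD j true := by
  constructor
  · rintro rfl j hj
    have h1 : j < (wl M ω).length := by rw [wl_length]; omega
    rw [List.getD_eq_getElem _ _ h1]
    simp only [wl, seg, List.getElem_map, List.getElem_range]
  · intro hj
    apply List.ext_getElem (by rw [wl_length, hw])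
    intro i h1 h2
    have hi : i ≤ M := by rw [wl_length] at h1; omega
    simp only [wl, seg, List.getElem_map, List.getElem_range]
    rw [← List.getD_eq_getElem w true h2]
    exact hj i hi

lemma measurableSet_coord (z : ℤ) (b : Bool) : MeasurableSet {ω : BSeq | ω z = b} := by
  have heq : {ω : BSeq | ω z = b} = (fun ω : BSeq => ω z) ⁻¹' {b} := rfl
  rw [heq]
  exact measurable_pi_apply z (measurableSet_singleton b)

lemma measurableSet_Cyl (M : ℕ) (w : List Bool) : MeasurableSet (Cyl M w) := by
  by_cases hw : w.length = M + 1
  · have : Cyl M w = ⋂ j ∈ Set.Iic M, {ω : BSeq | ω ((M:ℤ) - (j:ℤ)) = w.getD j true} := by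
      ext ω
      rw [Set.mem_iInter₂]
      simpa using mem_Cyl_iff hw ω
    rw [this]
    exact MeasurableSet.biInter (Set.to_countable _)
      (fun j _ => measurableSet_coord _ _)
  · have : Cyl M w = ∅ := by
      ext ω
      simp only [Cyl, Set.mem_setOf_eq, Set.mem_empty_iff_false, iff_false]
      intro hc
      exact hw (by rw [← hc, wl_length])
    simp [this]

lemma Cyl_disjoint {M : ℕ} {w w' : List Bool} (h : w ≠ w') :
    Cyl M w ∩ Cyl M w' = ∅ := by
  ext ω
  simp only [Cyl, Set.mem_inter_iff, Set.mem_setOf_eq, Set.mem_empty_iff_false, iff_false]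
  rintro ⟨rfl, h2⟩
  exact h h2

lemma Cyl_cover (M : ℕ) (ω : BSeq) : ω ∈ Cyl M (wl M ω) := rfl

lemma block_eq_Cyl (M : ℕ) (ω : BSeq) :
    {ω' : BSeq | ∀ i : ℕ, i ≤ M → ω' (i : ℤ) = ω (i : ℤ)} = Cyl M (wl M ω) := by
  ext ω'
  simp only [Set.mem_setOf_eq]
  constructor
  · intro hb
    show wl M ω' = wl M ω
    apply List.ext_getElem (by rw [wl_length, wl_length])
    intro i h1 h2
    have hi : i ≤ M := by rw [wl_length] at h1; omega
    simp only [wl, seg, List.getElem_map, List.getElem_range]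
    have hcast : ((M:ℤ) - (i:ℤ)) = ((M - i : ℕ) : ℤ) := by
      push_cast [Nat.cast_sub hi]
      ring
    rw [hcast]
    exact hb (M - i) (by omega)
  · intro hc i hi
    have hc' : wl M ω' = wl M ω := hc
    have h1 : (M - i) < (wl M ω').length := by rw [wl_length]; omega
    have := List.getElem_of_eq hc' h1
    simp only [wl, seg, List.getElem_map, List.getElem_range] at this
    have hcast : ((M:ℤ) - ((M - i : ℕ):ℤ)) = (i:ℤ) := by
      push_cast [Nat.cast_sub hi]
      ring
    rwa [hcast] at this

noncomputable def pc (μ : Measure BSeq) (M : ℕ) (w : List Bool) : ℝ := (μ (Cyl M w)).toReal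

variable (μ : Measure BSeq) [IsProbabilityMeasure μ]

lemma Cyl_pairwise_disjoint (M : ℕ) :
    Set.PairwiseDisjoint (↑(strs (M+1)) : Set (List Bool)) (Cyl M) := by
  intro w _ w' _ hww
  rw [Function.onFun, Set.disjoint_iff_inter_eq_empty]
  exact Cyl_disjoint hww

lemma sum_Cyl (M : ℕ) : ∑ w ∈ strs (M+1), μ (Cyl M w) = 1 := by
  rw [← measure_biUnion_finset (Cyl_pairwise_disjoint M) (fun w _ => measurableSet_Cyl M w)]
  have : (⋃ w ∈ strs (M+1), Cyl M w) = Set.univ := by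
    ext ω
    simp only [Set.mem_iUnion, Set.mem_univ, iff_true]
    exact ⟨wl M ω, wl_mem_strs M ω, rfl⟩
  rw [this]
  exact measure_univ

lemma sum_pc (M : ℕ) : ∑ w ∈ strs (M+1), pc μ M w = 1 := by
  have h := sum_Cyl μ M
  have heq : ∑ w ∈ strs (M+1), pc μ M w = (∑ w ∈ strs (M+1), μ (Cyl M w)).toReal := by
    rw [ENNReal.toReal_sum (fun w _ => measure_ne_top μ _)]
    rfl
  rw [heq, h]
  simp

lemma pc_nonneg (M : ℕ) (w : List Bool) : 0 ≤ pc μ M w := ENNReal.toReal_nonneg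

lemma pc_le_one (M : ℕ) (w : List Bool) : pc μ M w ≤ 1 := by
  rw [pc]
  have h1 : μ (Cyl M w) ≤ 1 := prob_le_one
  calc (μ (Cyl M w)).toReal ≤ (1:ENNReal).toReal :=
    ENNReal.toReal_mono (by simp) h1
  _ = 1 := by simp

lemma integrand_eq (M : ℕ) (ω : BSeq) :
    Real.logb 2 ((blockProb μ M (fun i => ω (i:ℤ))).toReal)
      = ∑ w ∈ strs (M+1), Set.indicator (Cyl M w)
          (fun _ => Real.logb 2 (pc μ M w)) ω := by
  rw [Finset.sum_eq_single (wl M ω)]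
  · rw [Set.indicator_of_mem (show ω ∈ Cyl M (wl M ω) from rfl)]
    have : blockProb μ M (fun i => ω (i:ℤ)) = μ (Cyl M (wl M ω)) := by
      rw [blockProb, ← block_eq_Cyl M ω]
    rw [this, pc]
  · intro w _ hww
    apply Set.indicator_of_notMem
    intro hc
    exact hww ((show wl M ω = w from hc) ▸ rfl)
  · intro hc
    exact absurd (wl_mem_strs M ω) hc

lemma integral_eq (M : ℕ) :
    ∫ ω, Real.logb 2 ((blockProb μ M (fun i => ω (i:ℤ))).toReal) ∂μ
      = ∑ w ∈ strs (M+1), pc μ M w * Real.logb 2 (pc μ M w) := by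
  rw [integral_congr_ae (Filter.Eventually.of_forall (integrand_eq μ M))]
  rw [integral_finset_sum]
  · apply Finset.sum_congr rfl
    intro w _
    rw [integral_indicator_const _ (measurableSet_Cyl M w)]
    rw [pc, smul_eq_mul]
    rfl
  · intro w _
    exact (integrable_const _).indicator (measurableSet_Cyl M w)

lemma entropyTerm_eq (M : ℕ) :
    entropyTerm μ M
      = -(1/((M:ℝ)+1)) * ∑ w ∈ strs (M+1), pc μ M w * Real.logb 2 (pc μ M w) := by
  rw [entropyTerm, integral_eq]

/-- Gibbs-type bound. -/
lemma gibbs (S : Finset (List Bool)) (p : List Bool → ℝ) (h0 : ∀ w ∈ S, 0 ≤ p w)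
    (h1 : ∑ w ∈ S, p w ≤ 1) :
    ∑ w ∈ S, -(p w * Real.log (p w)) ≤ (∑ w ∈ S, p w) * Real.log S.card + 1 := by
  set q := ∑ w ∈ S, p w with hq
  have hq0 : 0 ≤ q := Finset.sum_nonneg h0
  rcases eq_or_lt_of_le hq0 with hq0' | hqpos
  · have hz : ∀ w ∈ S, p w = 0 :=
      (Finset.sum_eq_zero_iff_of_nonneg h0).mp hq0'.symm
    have : ∑ w ∈ S, -(p w * Real.log (p w)) = 0 := by
      apply Finset.sum_eq_zero
      intro w hw
      rw [hz w hw]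
      simp
    rw [this, ← hq0']
    norm_num
  · have hSne : S.Nonempty := by
      rcases Finset.eq_empty_or_nonempty S with rfl | h
      · simp [hq] at hqpos
      · exact h
    have hK1 : (1:ℝ) ≤ S.card := by
      have := Finset.card_pos.mpr hSne
      exact_mod_cast this
    have hK0 : (0:ℝ) < S.card := by linarith
    set K := (S.card : ℝ) with hK
    have claim1 : ∑ w ∈ S, p w * Real.log (q / (K * p w)) ≤ 0 := by
      have hble : ∀ w ∈ S, p w * Real.log (q / (K * p w)) ≤ q / K - p w := by
        intro w hw
        rcases eq_or_lt_of_le (h0 w hw) with h | h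
        · rw [← h]
          simp
          positivity
        · have harg : 0 < q / (K * p w) := by positivity
          have := Real.log_le_sub_one_of_pos harg
          have h2 : p w * Real.log (q / (K * p w)) ≤ p w * (q / (K * p w) - 1) :=
            mul_le_mul_of_nonneg_left this (le_of_lt h)
          have h3 : p w * (q / (K * p w) - 1) = q / K - p w := by
            field_simp
          linarith
      calc ∑ w ∈ S, p w * Real.log (q / (K * p w)) ≤ ∑ w ∈ S, (q / K - p w) :=
        Finset.sum_le_sum hble
      _ = S.card * (q / K) - q := by
          rw [Finset.sum_sub_distrib, Finset.sum_const, nsmul_eq_mul, hq]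
      _ = 0 := by
          field_simp
          rw [hK]; ring
    have claim2 : ∀ w ∈ S, -(p w * Real.log (p w))
        = p w * Real.log (q / (K * p w)) + p w * Real.log K + p w * (- Real.log q) := by
      intro w hw
      rcases eq_or_lt_of_le (h0 w hw) with h | h
      · rw [← h]; ring
      · have hlog : Real.log (q / (K * p w)) = Real.log q - Real.log K - Real.log (p w) := by
          rw [Real.log_div (ne_of_gt hqpos) (by positivity), Real.log_mul (ne_of_gt hK0) (ne_of_gt h)]
          ring
        rw [hlog]
        ring
    have claim3 : -(q * Real.log q) ≤ 1 := by
      have harg : (0:ℝ) < q⁻¹ := by positivity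
      have := Real.log_le_sub_one_of_pos harg
      rw [Real.log_inv] at this
      have h2 : q * (- Real.log q) ≤ q * (q⁻¹ - 1) :=
        mul_le_mul_of_nonneg_left this (le_of_lt hqpos)
      have h3 : q * (q⁻¹ - 1) = 1 - q := by
        field_simp
      nlinarith
    calc ∑ w ∈ S, -(p w * Real.log (p w))
        = ∑ w ∈ S, (p w * Real.log (q / (K * p w)) + p w * Real.log K + p w * (- Real.log q)) :=
          Finset.sum_congr rfl claim2
    _ = (∑ w ∈ S, p w * Real.log (q / (K * p w))) + q * Real.log K + q * (- Real.log q) := by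
        rw [Finset.sum_add_distrib, Finset.sum_add_distrib, ← Finset.sum_mul, ← Finset.sum_mul, hq]
    _ ≤ 0 + q * Real.log K + 1 := by
        have : q * (- Real.log q) ≤ 1 := by linarith [claim3]
        linarith [claim1]
    _ = q * Real.log K + 1 := by ring

/-- a square of half-length n ending at position t -/
def SqAt (ω : BSeq) (t : ℤ) (n : ℕ) : Prop :=
  ∀ i : ℕ, i < n → ω (t - (n:ℤ) - (i:ℤ)) = ω (t - (i:ℤ))

/-- event: some fitting square (inside `[t-2n+1, t]`, `2n ≤ p+1`) ends at `t` -/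
def Esq (N : ℕ) (p : ℕ) (t : ℤ) : Set BSeq :=
  {ω | ∃ n : ℕ, N ≤ n ∧ 1 ≤ n ∧ 2*n ≤ p + 1 ∧ SqAt ω t n}

lemma seg_drop (ω : BSeq) (t : ℤ) (m j : ℕ) :
    (seg ω t m).drop j = seg ω (t - (j:ℤ)) (m - j) := by
  apply List.ext_getElem (by simp [seg_length])
  intro i h1 h2
  rw [List.getElem_drop]
  simp only [seg, List.getElem_map, List.getElem_range]
  congr 1
  push_cast
  ring

lemma seg_take (ω : BSeq) (t : ℤ) (m n : ℕ) (h : n ≤ m) :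
    (seg ω t m).take n = seg ω t n := by
  apply List.ext_getElem (by simp [seg_length]; omega)
  intro i h1 h2
  rw [List.getElem_take]
  simp only [seg, List.getElem_map, List.getElem_range]

lemma seg_eq_iff (ω : BSeq) (t t' : ℤ) (n : ℕ) :
    seg ω t n = seg ω t' n ↔ ∀ i : ℕ, i < n → ω (t - (i:ℤ)) = ω (t' - (i:ℤ)) := by
  constructor
  · intro h i hi
    have h1 : i < (seg ω t n).length := by rw [seg_length]; exact hi
    have := List.getElem_of_eq h h1
    simpa only [seg, List.getElem_map, List.getElem_range] using this
  · intro h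
    apply List.ext_getElem (by rw [seg_length, seg_length])
    intro i h1 h2
    simp only [seg, List.getElem_map, List.getElem_range]
    exact h i (by rwa [seg_length] at h1)

/-- bridge: goodness of the `j`-th suffix of the window is the square event at `M - j`. -/
lemma good_drop_iff (N M j : ℕ) (hj : j ≤ M) (ω : BSeq) :
    good N ((wl M ω).drop j) ↔ ω ∈ Esq N (M - j) ((M:ℤ) - (j:ℤ)) := by
  rw [wl, seg_drop]
  constructor
  · rintro ⟨n, hN, h1, h2, he⟩
    rw [seg_length] at h2
    refine ⟨n, hN, h1, by omega, ?_⟩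
    rw [seg_take _ _ _ _ (by omega), seg_drop, seg_take _ _ _ _ (by omega)] at he
    rw [seg_eq_iff] at he
    intro i hi
    exact (he i hi).symm
  · rintro ⟨n, hN, h1, h2, he⟩
    refine ⟨n, hN, h1, ?_, ?_⟩
    · rw [seg_length]; omega
    · rw [seg_take _ _ _ _ (by omega), seg_drop, seg_take _ _ _ _ (by omega)]
      rw [seg_eq_iff]
      intro i hi
      exact (he i hi).symm

lemma badcount_wl_le (N M : ℕ) (ω : BSeq) :
    badcount N (wl M ω)
      ≤ ((range (M+1)).filter (fun j => ω ∉ Esq N (M - j) ((M:ℤ) - (j:ℤ)))).card := by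
  refine (badcount_le_filter N (wl M ω)).trans ?_
  rw [wl_length]
  apply le_of_eq
  congr 1
  apply Finset.filter_congr
  intro j hj
  simp only [Finset.mem_range] at hj
  exact not_congr (good_drop_iff N M j (by omega) ω)

lemma measurableSet_eqcoord (a b : ℤ) : MeasurableSet {ω : BSeq | ω a = ω b} := by
  have : {ω : BSeq | ω a = ω b}
      = ⋃ v : Bool, ({ω : BSeq | ω a = v} ∩ {ω : BSeq | ω b = v}) := by
    ext ω
    simp only [Set.mem_setOf_eq, Set.mem_iUnion, Set.mem_inter_iff]
    constructor
    · intro h; exact ⟨ω b, h, rfl⟩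
    · rintro ⟨v, h1, h2⟩; rw [h1, h2]
  rw [this]
  apply MeasurableSet.iUnion
  intro v
  have h1 : MeasurableSet {ω : BSeq | ω a = v} := by
    have : {ω : BSeq | ω a = v} = (fun ω : BSeq => ω a) ⁻¹' {v} := rfl
    rw [this]
    exact measurable_pi_apply a (measurableSet_singleton v)
  have h2 : MeasurableSet {ω : BSeq | ω b = v} := by
    have : {ω : BSeq | ω b = v} = (fun ω : BSeq => ω b) ⁻¹' {v} := rfl
    rw [this]
    exact measurable_pi_apply b (measurableSet_singleton v)
  exact h1.inter h2

lemma measurableSet_SqAt (t : ℤ) (n : ℕ) : MeasurableSet {ω : BSeq | SqAt ω t n} := by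
  have : {ω : BSeq | SqAt ω t n}
      = ⋂ i ∈ Set.Iio n, {ω : BSeq | ω (t - (n:ℤ) - (i:ℤ)) = ω (t - (i:ℤ))} := by
    ext ω
    simp [SqAt]
  rw [this]
  exact MeasurableSet.biInter (Set.to_countable _) (fun i _ => measurableSet_eqcoord _ _)

lemma measurableSet_Esq (N p : ℕ) (t : ℤ) : MeasurableSet (Esq N p t) := by
  have : Esq N p t = ⋃ n ∈ {n : ℕ | N ≤ n ∧ 1 ≤ n ∧ 2*n ≤ p+1}, {ω | SqAt ω t n} := by
    ext ω
    simp only [Esq, Set.mem_setOf_eq, Set.mem_iUnion]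
    constructor
    · rintro ⟨n, h1, h2, h3, h4⟩; exact ⟨n, ⟨h1, h2, h3⟩, h4⟩
    · rintro ⟨n, ⟨h1, h2, h3⟩, h4⟩; exact ⟨n, h1, h2, h3, h4⟩
  rw [this]
  exact MeasurableSet.biUnion (Set.to_countable _) (fun n _ => measurableSet_SqAt _ _)

lemma shift_iterate_apply (p : ℕ) (ω : BSeq) (z : ℤ) : (shift^[p] ω) z = ω (z + p) := by
  induction p generalizing ω z with
  | zero => simp
  | succ p IH =>
    rw [Function.iterate_succ_apply, IH]
    simp only [shift]
    congr 1
    push_cast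
    ring

lemma Esq_preimage (N p : ℕ) :
    Esq N p ((p:ℤ)) = (shift^[p]) ⁻¹' (Esq N p 0) := by
  ext ω
  simp only [Esq, Set.mem_preimage, Set.mem_setOf_eq, SqAt]
  constructor
  · rintro ⟨n, h1, h2, h3, h4⟩
    refine ⟨n, h1, h2, h3, fun i hi => ?_⟩
    rw [shift_iterate_apply, shift_iterate_apply]
    have := h4 i hi
    convert this using 2 <;> ring
  · rintro ⟨n, h1, h2, h3, h4⟩
    refine ⟨n, h1, h2, h3, fun i hi => ?_⟩
    have := h4 i hi
    rw [shift_iterate_apply, shift_iterate_apply] at this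
    convert this using 2 <;> ring

lemma measurable_shift : Measurable shift := by
  apply measurable_pi_lambda
  intro z
  exact measurable_pi_apply (z + 1)

lemma markov_badcount (N M K : ℕ) :
    μ {ω | K + 1 ≤ badcount N (wl M ω)}
      ≤ (∑ p ∈ range (M+1), μ ((Esq N p ((p:ℤ)))ᶜ)) / (K+1) := by
  set f : BSeq → ℝ≥0∞ :=
    fun ω => ∑ j ∈ range (M+1), ((Esq N (M - j) ((M:ℤ) - (j:ℤ)))ᶜ).indicator 1 ω with hf
  have hfcount : ∀ ω, f ω
      = (((range (M+1)).filter (fun j => ω ∉ Esq N (M - j) ((M:ℤ) - (j:ℤ)))).card : ℝ≥0∞) := by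
    intro ω
    rw [hf, ← Finset.sum_boole]
    apply Finset.sum_congr rfl
    intro j _
    rw [Set.indicator_apply]
    by_cases h : ω ∈ Esq N (M - j) ((M:ℤ) - (j:ℤ)) <;> simp [h]
  have hsub : {ω | K + 1 ≤ badcount N (wl M ω)} ⊆ {ω | (K+1 : ℝ≥0∞) ≤ f ω} := by
    intro ω hω
    rw [Set.mem_setOf_eq] at hω ⊢
    rw [hfcount]
    have h2 := badcount_wl_le N M ω
    have : (K + 1 : ℕ)
        ≤ ((range (M+1)).filter (fun j => ω ∉ Esq N (M - j) ((M:ℤ) - (j:ℤ)))).card := by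
      omega
    exact_mod_cast this
  have hmeas : Measurable f := by
    apply Finset.measurable_sum
    intro j _
    exact (measurable_const).indicator (measurableSet_Esq _ _ _).compl
  calc μ {ω | K + 1 ≤ badcount N (wl M ω)} ≤ μ {ω | (K+1 : ℝ≥0∞) ≤ f ω} :=
        measure_mono hsub
  _ ≤ (∫⁻ ω, f ω ∂μ) / (K+1 : ℝ≥0∞) := by
      apply meas_ge_le_lintegral_div hmeas.aemeasurable
      · simp
      · simp
  _ = (∑ j ∈ range (M+1), μ ((Esq N (M - j) ((M:ℤ) - (j:ℤ)))ᶜ)) / (K+1) := by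
      congr 1
      rw [hf, lintegral_finset_sum]
      · apply Finset.sum_congr rfl
        intro j _
        rw [lintegral_indicator_one (measurableSet_Esq _ _ _).compl]
      · intro j _
        exact (measurable_const).indicator (measurableSet_Esq _ _ _).compl
  _ = (∑ p ∈ range (M+1), μ ((Esq N p ((p:ℤ)))ᶜ)) / (K+1) := by
      congr 1
      rw [← Finset.sum_range_reflect (fun p => μ ((Esq N p ((p:ℤ)))ᶜ)) (M+1)]
      apply Finset.sum_congr rfl
      intro j hj
      simp only [Finset.mem_range] at hj
      have h1 : M + 1 - 1 - j = M - j := by omega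
      rw [h1]
      congr 2
      push_cast [Nat.cast_sub (by omega : j ≤ M)]
      ring
  -- done

lemma Esq_measure_shift (hms : MeasurePreserving shift μ μ) (N p : ℕ) :
    μ ((Esq N p ((p:ℤ)))ᶜ) = μ ((Esq N p 0)ᶜ) := by
  have h1 : (Esq N p ((p:ℤ)))ᶜ = (shift^[p]) ⁻¹' (Esq N p 0)ᶜ := by
    rw [Esq_preimage]
    rfl
  rw [h1]
  exact (hms.iterate p).measure_preimage (measurableSet_Esq N p 0).compl.nullMeasurableSet

lemma Esq_mono (N : ℕ) {p q : ℕ} (h : p ≤ q) : Esq N p 0 ⊆ Esq N q 0 := by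
  rintro ω ⟨n, h1, h2, h3, h4⟩
  exact ⟨n, h1, h2, by omega, h4⟩

lemma tendsto_uN (hae : ∀ᵐ ω ∂μ, ∀ N₀ : ℕ, ∃ n, N₀ ≤ n ∧ SqAt ω 0 n) (N : ℕ) :
    Tendsto (fun p => μ ((Esq N p 0)ᶜ)) atTop (nhds 0) := by
  have hanti : Antitone (fun p => (Esq N p 0)ᶜ) := by
    intro p q h
    exact Set.compl_subset_compl.mpr (Esq_mono N h)
  have hlim := tendsto_measure_iInter_atTop (μ := μ)
    (fun p => (measurableSet_Esq N p 0).compl.nullMeasurableSet) hanti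
    ⟨0, measure_ne_top μ _⟩
  have hzero : μ (⋂ p, (Esq N p 0)ᶜ) = 0 := by
    have hsub : ∀ᵐ ω ∂μ, ω ∉ ⋂ p, (Esq N p 0)ᶜ := by
      filter_upwards [hae] with ω hω
      obtain ⟨n, hn1, hn2⟩ := hω (max N 1)
      intro hc
      rw [Set.mem_iInter] at hc
      have := hc (2*n - 1)
      rw [Set.mem_compl_iff] at this
      apply this
      refine ⟨n, le_trans (le_max_left _ _) hn1, le_trans (le_max_right _ _) hn1, by omega, hn2⟩
    exact measure_eq_zero_iff_ae_notMem.mpr hsub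
  rwa [hzero] at hlim

lemma tendsto_uN_toReal (hae : ∀ᵐ ω ∂μ, ∀ N₀ : ℕ, ∃ n, N₀ ≤ n ∧ SqAt ω 0 n) (N : ℕ) :
    Tendsto (fun p => (μ ((Esq N p 0)ᶜ)).toReal) atTop (nhds 0) := by
  have h := tendsto_uN μ hae N
  have h2 := (ENNReal.tendsto_toReal (by simp : (0:ℝ≥0∞) ≠ ⊤)).comp h
  exact h2

section PartA

variable (y : ℕ → Bool)

def Sk (k : ℕ) : Set ℕ := {t : ℕ | 0 < t ∧ ∀ i : ℕ, i ≤ hlam k y → y (t + i) = y i}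

lemma hlam_succ (k : ℕ) : hlam (k+1) y = hlam k y + sInf (Sk y k) := rfl

lemma tauhat_succ (k : ℕ) : tauhat (k+1) y = sInf (Sk y k) := by
  rw [tauhat]
  simp only [Nat.add_sub_cancel]
  rw [hlam_succ]
  omega

lemma hlam_mono : Monotone (fun k => hlam k y) := by
  apply monotone_nat_of_le_succ
  intro k
  rw [hlam_succ]
  omega

lemma Sk_anti {k m : ℕ} (h : k ≤ m) : Sk y m ⊆ Sk y k := by
  rintro t ⟨ht, hcond⟩
  exact ⟨ht, fun i hi => hcond i (le_trans hi (hlam_mono y h))⟩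

lemma Sk_stuck {k : ℕ} (h : ¬ (Sk y k).Nonempty) : ∀ j, hlam (k + j) y = hlam k y := by
  intro j
  induction j with
  | zero => rfl
  | succ j IH =>
    have hSk : Sk y (k + j) = Sk y k := by
      unfold Sk
      rw [IH]
    rw [show k + (j+1) = (k+j)+1 by ring, hlam_succ, hSk,
      Set.not_nonempty_iff_eq_empty.mp h]
    simp [IH]

lemma Sk_nonempty (h2 : Filter.Tendsto (fun k => tauhat k y) Filter.atTop Filter.atTop)
    (k : ℕ) : (Sk y k).Nonempty := by
  by_contra h
  have hstuck := Sk_stuck y h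
  have hzero : ∀ j, tauhat (k + j + 1) y = 0 := by
    intro j
    rw [tauhat_succ]
    have hSk : Sk y (k + j) = Sk y k := by
      unfold Sk
      rw [hstuck j]
    rw [hSk, Set.not_nonempty_iff_eq_empty.mp h]
    simp
  have := h2.eventually_ge_atTop 1
  rw [Filter.eventually_atTop] at this
  obtain ⟨a, ha⟩ := this
  have h1 := ha (k + a + 1) (by omega)
  rw [hzero a] at h1
  omega

lemma tauhat_mono (h2 : Filter.Tendsto (fun k => tauhat k y) Filter.atTop Filter.atTop)
    {k m : ℕ} (h : k ≤ m) : tauhat (k+1) y ≤ tauhat (m+1) y := by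
  rw [tauhat_succ, tauhat_succ]
  exact Nat.sInf_le (Sk_anti y h (Nat.sInf_mem (Sk_nonempty y h2 m)))

lemma hlam_ge_tauhat (k : ℕ) : tauhat (k+1) y ≤ hlam (k+1) y := by
  rw [tauhat_succ, hlam_succ]
  omega

end PartA

/-- Part A: from the hypotheses of the theorem, `ω` has arbitrarily long squares
ending at the origin. -/
lemma partA (ω : BSeq)
    (h1 : ∃ᶠ k : ℕ in atTop, Rrec (tauhat (k+1) (past ω) - 1) ω ≤ tauhat (k+1) (past ω))
    (h2 : Tendsto (fun k => tauhat k (past ω)) atTop atTop) :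
    ∀ N₀ : ℕ, ∃ n, N₀ ≤ n ∧ SqAt ω 0 n := by
  intro N₀
  set y := past ω with hy
  -- eventually tauhat ≥ N₀ + 1
  have hev := h2.eventually_ge_atTop (N₀ + 1)
  rw [Filter.eventually_atTop] at hev
  obtain ⟨k₁, hk₁⟩ := hev
  -- pick a frequent k beyond k₁
  obtain ⟨k, hk1, hk2⟩ :=
    (h1.and_eventually (Filter.eventually_atTop.mpr ⟨k₁, fun b hb => hb⟩)).exists
  -- τ := tauhat (k+1) y
  set τ := tauhat (k+1) y with hτ
  have hτN : N₀ + 1 ≤ τ := hk₁ (k+1) (by omega)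
  have hτ1 : 1 ≤ τ := by omega
  -- find m with a large window and τ' ≥ τ
  have hev2 := h2.eventually_ge_atTop τ
  rw [Filter.eventually_atTop] at hev2
  obtain ⟨k₂, hk₂⟩ := hev2
  set mm := max k (k₂ + 1) with hmm
  have hmm1 : 1 ≤ mm := by omega
  have hwin : τ - 1 ≤ hlam mm y := by
    obtain ⟨mm', hmm'⟩ : ∃ mm', mm = mm' + 1 := ⟨mm - 1, by omega⟩
    have h1' : τ ≤ tauhat mm y := hk₂ mm (by omega)
    have h2' := hlam_ge_tauhat y mm'
    rw [← hmm'] at h2'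
    omega
  set t := sInf (Sk y mm) with ht
  have htmem : t ∈ Sk y mm := Nat.sInf_mem (Sk_nonempty y h2 mm)
  have htτ : τ ≤ t := by
    have hmono := tauhat_mono y h2 (le_max_left k (k₂+1))
    rw [tauhat_succ y (max k (k₂+1))] at hmono
    exact hmono
  -- the Rrec index set
  set T := {j : ℕ | (τ - 1) + 1 ≤ j ∧ ∀ i : ℕ, i ≤ τ - 1 → ω (-(j : ℤ) - (i : ℤ)) = ω (-(i : ℤ))}
    with hT
  have htT : t ∈ T := by
    constructor
    · omega
    · intro i hi
      have hiw : i ≤ hlam mm y := by omega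
      have := htmem.2 i hiw
      rw [hy] at this
      simp only [past] at this
      have hcast : (-(t : ℤ) - (i : ℤ)) = -((t + i : ℕ) : ℤ) := by push_cast; ring
      rw [hcast]
      exact this
  have hTne : T.Nonempty := ⟨t, htT⟩
  have hRT : Rrec (τ - 1) ω = sInf T := rfl
  have hmemT : sInf T ∈ T := Nat.sInf_mem hTne
  have hTub : τ ≤ sInf T := by
    have := hmemT.1
    omega
  have hTeq : sInf T = τ := by
    rw [hRT] at hk1
    omega
  rw [hTeq] at hmemT
  refine ⟨τ, by omega, ?_⟩
  intro i hi
  have := hmemT.2 i (by omega)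
  have hc1 : ((0:ℤ) - (τ:ℤ) - (i:ℤ)) = -(τ:ℤ) - (i:ℤ) := by ring
  have hc2 : ((0:ℤ) - (i:ℤ)) = -(i:ℤ) := by ring
  rw [hc1, hc2]
  exact this

lemma entropyTerm_nonneg (M : ℕ) : 0 ≤ entropyTerm μ M := by
  rw [entropyTerm_eq]
  have hsum : ∑ w ∈ strs (M+1), pc μ M w * Real.logb 2 (pc μ M w) ≤ 0 := by
    apply Finset.sum_nonpos
    intro w hw
    apply mul_nonpos_of_nonneg_of_nonpos (pc_nonneg μ M w)
    exact Real.logb_nonpos (by norm_num) (pc_nonneg μ M w) (pc_le_one μ M w)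
  have hpos : (0:ℝ) < 1/((M:ℝ)+1) := by positivity
  nlinarith

lemma qB_eq (N K M : ℕ) :
    ∑ w ∈ (strs (M+1)).filter (fun w => ¬ badcount N w ≤ K), pc μ M w
      = (μ {ω | K + 1 ≤ badcount N (wl M ω)}).toReal := by
  set Gc := (strs (M+1)).filter (fun w => ¬ badcount N w ≤ K) with hGc
  have hU : (⋃ w ∈ Gc, Cyl M w) = {ω | K + 1 ≤ badcount N (wl M ω)} := by
    ext ω
    simp only [Set.mem_iUnion, Set.mem_setOf_eq]
    constructor
    · rintro ⟨w, hw, hc⟩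
      have hcc : wl M ω = w := hc
      rw [hGc, Finset.mem_filter] at hw
      rw [hcc]
      omega
    · intro hb
      refine ⟨wl M ω, ?_, rfl⟩
      rw [hGc, Finset.mem_filter]
      exact ⟨wl_mem_strs M ω, by omega⟩
  have hdisj : Set.PairwiseDisjoint (↑Gc : Set (List Bool)) (Cyl M) := by
    apply Set.PairwiseDisjoint.subset (Cyl_pairwise_disjoint M)
    intro w hw
    rw [hGc] at hw
    simp only [Finset.coe_filter, Set.mem_setOf_eq] at hw
    exact hw.1
  have hmeassum := measure_biUnion_finset (μ := μ) hdisj (fun w _ => measurableSet_Cyl M w)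
  rw [hU] at hmeassum
  have h2 : (∑ w ∈ Gc, pc μ M w) = (∑ w ∈ Gc, μ (Cyl M w)).toReal := by
    rw [ENNReal.toReal_sum (fun w _ => measure_ne_top μ _)]
    rfl
  rw [h2, ← hmeassum]

/-- The main per-`M` entropy bound. -/
lemma main_bound (r K M : ℕ) (hr : 2 ≤ r) :
    entropyTerm μ M ≤ 2*(K:ℝ)/((M:ℝ)+1) + 1/(r:ℝ)
      + (μ {ω | K + 1 ≤ badcount (3*r^2) (wl M ω)}).toReal
      + 2/(((M:ℝ)+1) * Real.log 2) := by
  set N := 3*r^2 with hN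
  set A := strs (M+1) with hA
  set G := A.filter (fun w => badcount N w ≤ K) with hG
  set Gc := A.filter (fun w => ¬ badcount N w ≤ K) with hGc
  have hlog2 : (0:ℝ) < Real.log 2 := Real.log_pos (by norm_num)
  have hM1 : (0:ℝ) < (M:ℝ) + 1 := by positivity
  have hr0 : (0:ℝ) < (r:ℝ) := by
    have : (0:ℕ) < r := by omega
    exact_mod_cast this
  set D := ((M:ℝ)+1) * Real.log 2 with hD
  have hD0 : 0 < D := by positivity
  -- entropyTerm in terms of natural log
  have hterm : entropyTerm μ M
      = (∑ w ∈ A, -(pc μ M w * Real.log (pc μ M w))) / D := by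
    rw [entropyTerm_eq]
    have hx : ∀ w ∈ A, pc μ M w * Real.logb 2 (pc μ M w)
        = (pc μ M w * Real.log (pc μ M w)) / Real.log 2 := by
      intro w _
      rw [Real.logb]
      ring
    rw [Finset.sum_congr rfl hx, ← Finset.sum_div]
    rw [show ∑ w ∈ A, -(pc μ M w * Real.log (pc μ M w))
        = -∑ w ∈ A, pc μ M w * Real.log (pc μ M w) from by rw [Finset.sum_neg_distrib]]
    rw [hD]
    field_simp
  -- split of the entropy sum
  have hsplit : ∑ w ∈ A, -(pc μ M w * Real.log (pc μ M w))
      = (∑ w ∈ G, -(pc μ M w * Real.log (pc μ M w)))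
        + ∑ w ∈ Gc, -(pc μ M w * Real.log (pc μ M w)) :=
    (Finset.sum_filter_add_sum_filter_not A _ _).symm
  -- partial sums of pc are ≤ 1
  have hsuble : ∀ (S : Finset (List Bool)), S ⊆ A → ∑ w ∈ S, pc μ M w ≤ 1 := by
    intro S hS
    calc ∑ w ∈ S, pc μ M w ≤ ∑ w ∈ A, pc μ M w :=
      Finset.sum_le_sum_of_subset_of_nonneg hS (fun w _ _ => pc_nonneg μ M w)
    _ = 1 := sum_pc μ M
  have hgibG := gibbs G (pc μ M) (fun w _ => pc_nonneg μ M w)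
    (hsuble G (Finset.filter_subset _ _))
  have hgibGc := gibbs Gc (pc μ M) (fun w _ => pc_nonneg μ M w)
    (hsuble Gc (Finset.filter_subset _ _))
  set qB := ∑ w ∈ Gc, pc μ M w with hqB
  have hqB0 : 0 ≤ qB := Finset.sum_nonneg (fun w _ => pc_nonneg μ M w)
  have hlog4 : Real.log 4 = 2 * Real.log 2 := by
    rw [show (4:ℝ) = 2^2 by norm_num, Real.log_pow]
    push_cast
    ring
  -- bound for the good part
  have hGbound : (∑ w ∈ G, pc μ M w) * Real.log G.card
      ≤ (K:ℝ)*(2*Real.log 2) + ((M:ℝ)+1)*((r:ℝ)⁻¹*Real.log 2) := by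
    have hRHS0 : (0:ℝ) ≤ (K:ℝ)*(2*Real.log 2) + ((M:ℝ)+1)*((r:ℝ)⁻¹*Real.log 2) := by
      positivity
    rcases Nat.eq_zero_or_pos G.card with h0 | hpos
    · rw [h0]
      simp only [Nat.cast_zero, Real.log_zero, mul_zero]
      exact hRHS0
    · have hcardG : (G.card : ℝ) ≤ 4^K * (cc r)^(M+1) := count_main hr (M+1) K
      have hcpos : (0:ℝ) < cc r := cc_pos r
      have hlogle : Real.log G.card ≤ Real.log ((4:ℝ)^K * (cc r)^(M+1)) :=
        Real.log_le_log (by exact_mod_cast hpos) hcardG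
      have hlogeq : Real.log ((4:ℝ)^K * (cc r)^(M+1))
          = (K:ℝ)*(2*Real.log 2) + ((M:ℝ)+1)*((r:ℝ)⁻¹*Real.log 2) := by
        rw [Real.log_mul (by positivity) (by positivity), Real.log_pow, Real.log_pow]
        rw [hlog4]
        rw [show Real.log (cc r) = (r:ℝ)⁻¹ * Real.log 2 from by
          rw [cc, Real.log_rpow (by norm_num)]]
        push_cast
        ring
      have hlogpos : 0 ≤ Real.log ((4:ℝ)^K * (cc r)^(M+1)) := by
        rw [hlogeq] at *
        exact hRHS0
      have hle1 := hsuble G (Finset.filter_subset _ _)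
      have h0le : 0 ≤ ∑ w ∈ G, pc μ M w := Finset.sum_nonneg (fun w _ => pc_nonneg μ M w)
      calc (∑ w ∈ G, pc μ M w) * Real.log G.card
          ≤ (∑ w ∈ G, pc μ M w) * Real.log ((4:ℝ)^K * (cc r)^(M+1)) := by
            apply mul_le_mul_of_nonneg_left hlogle h0le
      _ ≤ 1 * Real.log ((4:ℝ)^K * (cc r)^(M+1)) := by
            apply mul_le_mul_of_nonneg_right hle1 hlogpos
      _ = (K:ℝ)*(2*Real.log 2) + ((M:ℝ)+1)*((r:ℝ)⁻¹*Real.log 2) := by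
            rw [one_mul, hlogeq]
  -- bound for the bad part
  have hGcbound : qB * Real.log Gc.card ≤ qB * D := by
    rcases Nat.eq_zero_or_pos Gc.card with h0 | hpos
    · rw [h0]
      simp only [Nat.cast_zero, Real.log_zero, mul_zero]
      positivity
    · have hcard : (Gc.card : ℝ) ≤ (2:ℝ)^(M+1) := by
        have h1 : Gc.card ≤ A.card := Finset.card_filter_le _ _
        have h2 : A.card ≤ 2^(M+1) := card_strs_le (M+1)
        have : (Gc.card : ℕ) ≤ 2^(M+1) := le_trans h1 h2
        exact_mod_cast this
      have hlogle : Real.log Gc.card ≤ Real.log ((2:ℝ)^(M+1)) :=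
        Real.log_le_log (by exact_mod_cast hpos) hcard
      have hlogeq : Real.log ((2:ℝ)^(M+1)) = D := by
        rw [Real.log_pow, hD]
        push_cast
        ring
      calc qB * Real.log Gc.card ≤ qB * Real.log ((2:ℝ)^(M+1)) :=
            mul_le_mul_of_nonneg_left hlogle hqB0
      _ = qB * D := by rw [hlogeq]
  -- assemble
  have hEnt : ∑ w ∈ A, -(pc μ M w * Real.log (pc μ M w))
      ≤ (K:ℝ)*(2*Real.log 2) + ((M:ℝ)+1)*((r:ℝ)⁻¹*Real.log 2) + qB * D + 2 := by
    rw [hsplit]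
    linarith [hgibG, hgibGc, hGbound, hGcbound]
  have hqBrw : qB = (μ {ω | K + 1 ≤ badcount N (wl M ω)}).toReal := qB_eq μ N K M
  rw [hterm, div_le_iff₀ hD0, ← hqBrw]
  calc ∑ w ∈ A, -(pc μ M w * Real.log (pc μ M w))
      ≤ (K:ℝ)*(2*Real.log 2) + ((M:ℝ)+1)*((r:ℝ)⁻¹*Real.log 2) + qB * D + 2 := hEnt
  _ = (2*(K:ℝ)/((M:ℝ)+1) + 1/(r:ℝ) + qB + 2/D) * D := by
      rw [hD]
      field_simp

lemma H_eq_zero (hms : MeasurePreserving shift μ μ)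
    (hae : ∀ᵐ ω ∂μ, ∀ N₀ : ℕ, ∃ n, N₀ ≤ n ∧ SqAt ω 0 n)
    (H : ℝ) (hent : Tendsto (entropyTerm μ) atTop (nhds H)) : H = 0 := by
  have hH0 : 0 ≤ H :=
    le_of_tendsto_of_tendsto' tendsto_const_nhds hent (fun M => entropyTerm_nonneg μ M)
  have key : ∀ ε : ℝ, 0 < ε → H ≤ ε := by
    intro ε hε
    -- choose r
    set r : ℕ := max 2 ⌈4/ε⌉₊ with hrdef
    have hr : 2 ≤ r := le_max_left _ _
    have hrε : 1/(r:ℝ) ≤ ε/4 := by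
      have h1 : (4/ε : ℝ) ≤ ⌈4/ε⌉₊ := Nat.le_ceil _
      have h2 : (⌈4/ε⌉₊ : ℝ) ≤ r := by
        have : ⌈4/ε⌉₊ ≤ r := le_max_right _ _
        exact_mod_cast this
      have hrpos : (0:ℝ) < r := by
        have : (0:ℕ) < r := by omega
        exact_mod_cast this
      rw [div_le_div_iff₀ hrpos (by norm_num)]
      have h3 : 4/ε ≤ (r:ℝ) := le_trans h1 h2
      rw [div_le_iff₀ hε] at h3
      linarith
    set N := 3*r^2 with hNdef
    -- choose P₀
    have hu := tendsto_uN_toReal μ hae N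
    have huev := hu.eventually (eventually_le_nhds (show (0:ℝ) < ε^2/64 by positivity))
    rw [eventually_atTop] at huev
    obtain ⟨P₀, hP₀⟩ := huev
    -- choose M₀
    set M₀ : ℕ := ⌈64*(P₀:ℝ)/ε^2 + 16/ε⌉₊ with hM₀def
    -- final bound for all M ≥ M₀
    have hbound : ∀ M : ℕ, M₀ ≤ M → entropyTerm μ M ≤ ε := by
      intro M hM
      have hM1 : (0:ℝ) < (M:ℝ)+1 := by positivity
      have hMlarge : 64*(P₀:ℝ)/ε^2 + 16/ε ≤ (M:ℝ) + 1 := by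
        have h1 : (64*(P₀:ℝ)/ε^2 + 16/ε) ≤ (M₀:ℝ) := Nat.le_ceil _
        have h2 : (M₀:ℝ) ≤ M := by exact_mod_cast hM
        linarith
      set K : ℕ := ⌊(ε/8)*((M:ℝ)+1)⌋₊ with hKdef
      have hKle : (K:ℝ) ≤ (ε/8)*((M:ℝ)+1) := Nat.floor_le (by positivity)
      have hKge : (ε/8)*((M:ℝ)+1) < (K:ℝ) + 1 := Nat.lt_floor_add_one _
      -- term 1
      have ht1 : 2*(K:ℝ)/((M:ℝ)+1) ≤ ε/4 := by
        rw [div_le_iff₀ hM1]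
        nlinarith
      -- term 4
      have ht4 : 2/(((M:ℝ)+1) * Real.log 2) ≤ ε/4 := by
        have hlog2 : (1:ℝ)/2 ≤ Real.log 2 := by
          have := Real.log_two_gt_d9
          linarith
        have hx : (0:ℝ) < ((M:ℝ)+1) * Real.log 2 := by nlinarith
        rw [div_le_iff₀ hx]
        have h16 : 16/ε ≤ (M:ℝ)+1 := by
          have : (0:ℝ) ≤ 64*(P₀:ℝ)/ε^2 := by positivity
          linarith
        rw [div_le_iff₀ hε] at h16
        nlinarith
      -- term 3 : the measure of many bad positions
      have ht3 : (μ {ω | K + 1 ≤ badcount N (wl M ω)}).toReal ≤ ε/4 := by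
        have hm := markov_badcount μ N M K
        have hsum : (∑ p ∈ range (M+1), μ ((Esq N p ((p:ℤ)))ᶜ))
            = ∑ p ∈ range (M+1), μ ((Esq N p 0)ᶜ) :=
          Finset.sum_congr rfl (fun p _ => Esq_measure_shift μ hms N p)
        rw [hsum] at hm
        -- to real numbers
        have hfin : (∑ p ∈ range (M+1), μ ((Esq N p 0)ᶜ)) ≠ ⊤ :=
          ENNReal.sum_ne_top.mpr (fun p _ => measure_ne_top μ _)
        have hKne : ((K:ℝ≥0∞) + 1) ≠ 0 := by simp
        have hKnetop : ((K:ℝ≥0∞) + 1) ≠ ⊤ := by simp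
        have htr := ENNReal.toReal_mono (ENNReal.div_lt_top hfin hKne).ne hm
        rw [ENNReal.toReal_div] at htr
        have htrsum : (∑ p ∈ range (M+1), μ ((Esq N p 0)ᶜ)).toReal
            = ∑ p ∈ range (M+1), (μ ((Esq N p 0)ᶜ)).toReal :=
          ENNReal.toReal_sum (fun p _ => measure_ne_top μ _)
        rw [htrsum] at htr
        have hKtr : ((K:ℝ≥0∞) + 1).toReal = (K:ℝ) + 1 := by
          rw [ENNReal.toReal_add (ENNReal.natCast_ne_top K) ENNReal.one_ne_top]
          simp
        rw [hKtr] at htr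
        -- bound the sum
        have hsumb : ∑ p ∈ range (M+1), (μ ((Esq N p 0)ᶜ)).toReal
            ≤ (P₀:ℝ) + ((M:ℝ)+1)*(ε^2/64) := by
          have hper : ∀ p ∈ range (M+1), (μ ((Esq N p 0)ᶜ)).toReal
              ≤ (if p < P₀ then (1:ℝ) else 0) + ε^2/64 := by
            intro p _
            by_cases hp : p < P₀
            · simp only [hp, if_true]
              have h1 : (μ ((Esq N p 0)ᶜ)).toReal ≤ 1 := by
                have := prob_le_one (μ := μ) (s := (Esq N p 0)ᶜ)
                calc (μ ((Esq N p 0)ᶜ)).toReal ≤ (1:ℝ≥0∞).toReal :=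
                  ENNReal.toReal_mono (by simp) this
                _ = 1 := by simp
              have : (0:ℝ) ≤ ε^2/64 := by positivity
              linarith
            · simp only [hp, if_false]
              have := hP₀ p (by omega)
              linarith
          calc ∑ p ∈ range (M+1), (μ ((Esq N p 0)ᶜ)).toReal
              ≤ ∑ p ∈ range (M+1), ((if p < P₀ then (1:ℝ) else 0) + ε^2/64) :=
                Finset.sum_le_sum hper
          _ = (∑ p ∈ range (M+1), (if p < P₀ then (1:ℝ) else 0))
                + ((M:ℝ)+1)*(ε^2/64) := by
              rw [Finset.sum_add_distrib, Finset.sum_const, Finset.card_range,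
                nsmul_eq_mul]
              push_cast
              ring
          _ ≤ (P₀:ℝ) + ((M:ℝ)+1)*(ε^2/64) := by
              have : (∑ p ∈ range (M+1), (if p < P₀ then (1:ℝ) else 0))
                  = ((range (M+1)).filter (fun p => p < P₀)).card := by
                rw [Finset.sum_boole]
              rw [this]
              have hsub : (range (M+1)).filter (fun p => p < P₀) ⊆ range P₀ := by
                intro p hp
                simp only [Finset.mem_filter, Finset.mem_range] at hp ⊢
                omega
              have := Finset.card_le_card hsub
              rw [Finset.card_range] at this
              have : (((range (M+1)).filter (fun p => p < P₀)).card : ℝ) ≤ (P₀:ℝ) := by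
                exact_mod_cast this
              linarith
        -- combine
        have hKpos : (0:ℝ) < (K:ℝ) + 1 := by positivity
        have hfinal : (∑ p ∈ range (M+1), (μ ((Esq N p 0)ᶜ)).toReal) / ((K:ℝ)+1) ≤ ε/4 := by
          rw [div_le_iff₀ hKpos]
          have hP₀b : (P₀:ℝ) ≤ ((M:ℝ)+1)*(ε^2/64) := by
            have h64 : 64*(P₀:ℝ)/ε^2 ≤ (M:ℝ)+1 := by
              have : (0:ℝ) ≤ 16/ε := by positivity
              linarith
            rw [div_le_iff₀ (by positivity)] at h64
            nlinarith
          have hs2 : ∑ p ∈ range (M+1), (μ ((Esq N p 0)ᶜ)).toReal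
              ≤ 2*(((M:ℝ)+1)*(ε^2/64)) := by linarith
          nlinarith
        linarith
      -- put it together
      have := main_bound μ r K M hr
      rw [← hNdef] at this
      linarith
    exact le_of_tendsto hent (eventually_atTop.mpr ⟨M₀, hbound⟩)
  by_contra hne
  have hHpos : 0 < H := lt_of_le_of_ne hH0 (Ne.symm hne)
  have := key (H/2) (by linarith)
  linarith

end EZ

/-- Stationary ergodic binary process: if almost surely
`R(τ̂_{k+1} − 1) ≤ τ̂_{k+1}` infinitely often and `τ̂_k → ∞`, then the process entropy
`H` equals `0`. -/
theorem entropy_zero_of_overlap (μ : Measure BSeq) [IsProbabilityMeasure μ]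
    (herg : Ergodic shift μ) (H : ℝ)
    (hent : Tendsto (entropyTerm μ) atTop (nhds H))
    (h : ∀ᵐ ω ∂μ,
        (∃ᶠ k : ℕ in atTop,
            Rrec (tauhat (k + 1) (past ω) - 1) ω ≤ tauhat (k + 1) (past ω)) ∧
          Tendsto (fun k => tauhat k (past ω)) atTop atTop) :
    H = 0 := by
  have hae : ∀ᵐ ω ∂μ, ∀ N₀ : ℕ, ∃ n, N₀ ≤ n ∧ EZ.SqAt ω 0 n := by
    filter_upwards [h] with ω hω
    exact EZ.partA ω hω.1 hω.2
  exact EZ.H_eq_zero μ herg.toMeasurePreserving hae H hent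
end
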